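/- arXiv:1502.00696 — 5 statements merged into one kernel-verified Lean document; each statement's English description precedes it below -/
import Mathlib

section
/- Let α ∈ (0,1). There exists a constant c = c(α) > 0 such that for every p ∈ (1, 1/α), with q defined by 1/q = 1/p − α, there exists a nonzero f ∈ L^p(0,∞) with ‖I^α[f]‖_{L^q(0,∞)} ≥ c · [(p − 1)(1 − α p)]^{−(1 − α)} · ‖f‖_{L^p(0,∞)}. Consequently the operator norm K_{I,α}(p) := sup_{0 ≠ f ∈ L^p(0,∞)} ‖I^α[f]‖_q / ‖f‖_p satisfies K_{I,α}(p) ≥ c · [(p−1)(1−αp)]^{−(1−α)}. -/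
open MeasureTheory Real Set

/-- The Riemann–Liouville fractional integral
`I^α[φ](x) = (1/Γ(α)) ∫_0^x φ(t) (x-t)^{α-1} dt`. -/
noncomputable def fracInt (α : ℝ) (φ : ℝ → ℝ) (x : ℝ) : ℝ :=
  (1 / Real.Gamma α) * ∫ t in (0 : ℝ)..x, φ t * (x - t) ^ (α - 1)

private lemma aux_xx {x s : ℝ} (hx : 0 < x) (hs : 0 < s) (hs1 : s ≤ 1) :
    Real.exp (-1) ≤ x ^ (s * x) := by
  rcases le_or_gt x 1 with h1 | h1
  · rw [Real.rpow_def_of_pos hx]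
    apply Real.exp_le_exp.mpr
    have hlog : Real.log x⁻¹ ≤ x⁻¹ - 1 := Real.log_le_sub_one_of_pos (by positivity)
    rw [Real.log_inv] at hlog
    have h2 : 1 - x⁻¹ ≤ Real.log x := by linarith
    have h3 : s * x * (1 - x⁻¹) ≤ s * x * Real.log x :=
      mul_le_mul_of_nonneg_left h2 (by positivity)
    have h4 : s * x * (1 - x⁻¹) = s * (x - 1) := by field_simp
    nlinarith
  · have h2 : (1:ℝ) ≤ x ^ (s * x) := Real.one_le_rpow h1.le (by positivity)
    have h3 : Real.exp (-1) ≤ 1 := by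
      rw [Real.exp_le_one_iff]; norm_num
    linarith

private lemma lint_eq {h : ℝ → ℝ} {u v : ℝ} (huv : u ≤ v)
    (hint : IntegrableOn h (Set.Ioo u v)) (hnn : ∀ x ∈ Set.Ioo u v, 0 ≤ h x) :
    ∫⁻ x in Set.Ioo u v, ENNReal.ofReal (h x) = ENNReal.ofReal (∫ x in u..v, h x) := by
  rw [intervalIntegral.integral_of_le huv, MeasureTheory.integral_Ioc_eq_integral_Ioo,
    MeasureTheory.ofReal_integral_eq_lintegral_ofReal hint
      ((ae_restrict_iff' measurableSet_Ioo).2 (MeasureTheory.ae_of_all _ hnn))]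

private lemma intOn_shift {a b e : ℝ} (hb2 : b < 2) :
    IntegrableOn (fun t : ℝ => (2 - t) ^ e) (Set.Ioo a b) := by
  apply (ContinuousOn.integrableOn_compact (isCompact_Icc (a := a) (b := b)) ?_).mono_set
    Set.Ioo_subset_Icc_self
  apply ContinuousOn.rpow_const ((continuous_const.sub continuous_id).continuousOn)
  intro x hx
  exact Or.inl (by simp only [Pi.sub_apply, id]; intro h; nlinarith [hx.2])

private lemma norm_eq {a b r P : ℝ} (ha : 0 < a) (hab : a < b) (hb2 : b < 2) (hP : 0 < P) :
    eLpNorm (Set.indicator (Set.Ioo a b) (fun t => (2-t)^r)) (ENNReal.ofReal P)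
      (volume.restrict (Set.Ioi (0:ℝ)))
      = ENNReal.ofReal ((∫ s in (2-b)..(2-a), s^(r*P)) ^ (1/P)) := by
  have hP0 : (ENNReal.ofReal P) ≠ 0 := by
    simp only [ne_eq, ENNReal.ofReal_eq_zero]; push_neg; linarith
  rw [eLpNorm_eq_lintegral_rpow_enorm_toReal hP0 (by simp), ENNReal.toReal_ofReal hP.le]
  simp only [enorm_eq_nnnorm]
  have key : ∀ x : ℝ, (‖Set.indicator (Set.Ioo a b) (fun t => (2-t)^r) x‖₊ : ENNReal) ^ P
      = Set.indicator (Set.Ioo a b) (fun t => ENNReal.ofReal ((2-t)^(r*P))) x := by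
    intro x
    by_cases hx : x ∈ Set.Ioo a b
    · simp only [Set.indicator_of_mem hx]
      have h2x : (0:ℝ) ≤ 2 - x := by linarith [hx.2]
      rw [Real.rpow_mul h2x, ← ENNReal.ofReal_rpow_of_nonneg (Real.rpow_nonneg h2x r) hP.le]
      congr 1
      rw [← enorm_eq_nnnorm, ← ofReal_norm, Real.norm_eq_abs, abs_of_nonneg (Real.rpow_nonneg h2x r)]
    · simp only [Set.indicator_of_notMem hx, nnnorm_zero, ENNReal.coe_zero,
        ENNReal.zero_rpow_of_pos hP, Set.indicator_of_notMem hx]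
  simp_rw [key]
  rw [lintegral_indicator measurableSet_Ioo, Measure.restrict_restrict measurableSet_Ioo,
    Set.inter_eq_self_of_subset_left (show Set.Ioo a b ⊆ Set.Ioi 0 from
      fun x hx => lt_trans ha hx.1),
    lint_eq hab.le (intOn_shift hb2) (fun x hx => Real.rpow_nonneg (by linarith [hx.2]) _),
    intervalIntegral.integral_comp_sub_left (fun s => s^(r*P)) 2,
    ENNReal.ofReal_rpow_of_nonneg ?_ (by positivity)]
  exact intervalIntegral.integral_nonneg (by linarith)
    (fun s hs => Real.rpow_nonneg (by linarith [hs.1]) _)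

private lemma norm_ne_zero {a b r P : ℝ} (ha : 0 < a) (hab : a < b) (hb2 : b < 2) (hP : 0 < P) :
    eLpNorm (Set.indicator (Set.Ioo a b) (fun t => (2-t)^r)) (ENNReal.ofReal P)
      (volume.restrict (Set.Ioi (0:ℝ))) ≠ 0 := by
  rw [norm_eq ha hab hb2 hP]
  simp only [ne_eq, ENNReal.ofReal_eq_zero, not_le]
  apply Real.rpow_pos_of_pos
  apply intervalIntegral.intervalIntegral_pos_of_pos_on
  · exact intervalIntegral.intervalIntegrable_rpow
      (Or.inr (Set.notMem_uIcc_of_lt (by linarith) (by linarith)))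
  · exact fun s hs => Real.rpow_pos_of_pos (by linarith [hs.1]) _
  · linarith

private lemma fracInt_eq_aux {a b r x : ℝ} (ha : 0 < a) (hab : a < b) (hbx : b < x) (e : ℝ) :
    (∫ t in (0:ℝ)..x, (Set.indicator (Set.Ioo a b) (fun t => (2-t)^r)) t * (x-t)^e)
      = ∫ t in a..b, (2-t)^r * (x-t)^e := by
  have hx : (0:ℝ) ≤ x := by linarith
  rw [intervalIntegral.integral_of_le hx]
  have hpt : ∀ t : ℝ, (Set.indicator (Set.Ioo a b) (fun t => (2-t)^r)) t * (x-t)^e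
      = Set.indicator (Set.Ioo a b) (fun t => (2-t)^r * (x-t)^e) t := fun t =>
    (Set.indicator_mul_left (i := t) (Set.Ioo a b)
      (fun t => (2-t)^r) (fun t => (x-t)^e)).symm
  simp_rw [hpt]
  rw [MeasureTheory.setIntegral_indicator measurableSet_Ioo,
    Set.inter_eq_self_of_subset_right (show Set.Ioo a b ⊆ Set.Ioc 0 x from
      fun t ht => ⟨lt_trans ha ht.1, le_of_lt (lt_trans ht.2 hbx)⟩),
    ← MeasureTheory.integral_Ioc_eq_integral_Ioo, ← intervalIntegral.integral_of_le hab.le]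

private lemma eLpNorm_lower {F : ℝ → ℝ} {G : ℝ → ℝ} {u v Q : ℝ} (hu : 0 < u) (hQ : 0 < Q)
    (hFG : ∀ x ∈ Set.Ioo u v, G x ≤ F x) :
    (∫⁻ x in Set.Ioo u v, (ENNReal.ofReal (G x)) ^ Q) ^ (1/Q)
      ≤ eLpNorm F (ENNReal.ofReal Q) (volume.restrict (Set.Ioi (0:ℝ))) := by
  have hQ0 : (ENNReal.ofReal Q) ≠ 0 := by
    simp only [ne_eq, ENNReal.ofReal_eq_zero]; push_neg; linarith
  rw [eLpNorm_eq_lintegral_rpow_enorm_toReal hQ0 (by simp), ENNReal.toReal_ofReal hQ.le]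
  apply ENNReal.rpow_le_rpow _ (by positivity)
  have h1 : ∫⁻ x in Set.Ioo u v, (ENNReal.ofReal (G x)) ^ Q
      ≤ ∫⁻ x in Set.Ioo u v, (‖F x‖₊ : ENNReal) ^ Q := by
    apply lintegral_mono_ae
    refine (ae_restrict_iff' measurableSet_Ioo).2 (MeasureTheory.ae_of_all _ (fun x hx => ?_))
    exact ENNReal.rpow_le_rpow (le_trans (ENNReal.ofReal_le_ofReal (hFG x hx))
      (Real.ofReal_le_enorm _)) hQ.le
  exact h1.trans (lintegral_mono' (Measure.restrict_mono
    (fun x hx => lt_trans hu hx.1) le_rfl) le_rfl)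

set_option maxHeartbeats 1000000 in
/-- Lower bound for the operator norm of the Riemann–Liouville fractional integral
`I^α : L^p(0,∞) → L^q(0,∞)`: for some `c = c(α) > 0` and any admissible `p`, there is a
nonzero `f ∈ L^p(0,∞)` with `‖I^α[f]‖_q ≥ c · [(p-1)(1-αp)]^{-(1-α)} · ‖f‖_p`. -/
theorem stmt_1 (α : ℝ) (hα : α ∈ Set.Ioo (0 : ℝ) 1) :
    ∃ c : ℝ, 0 < c ∧
      ∀ p q : ℝ, p ∈ Set.Ioo (1 : ℝ) (1 / α) → 1 / q = 1 / p - α →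
        ∃ f : ℝ → ℝ,
          MemLp f (ENNReal.ofReal p) (volume.restrict (Set.Ioi (0 : ℝ))) ∧
          eLpNorm f (ENNReal.ofReal p) (volume.restrict (Set.Ioi (0 : ℝ))) ≠ 0 ∧
          ENNReal.ofReal (c * ((p - 1) * (1 - α * p)) ^ (-(1 - α))) *
              eLpNorm f (ENNReal.ofReal p) (volume.restrict (Set.Ioi (0 : ℝ))) ≤
            eLpNorm (fracInt α f) (ENNReal.ofReal q) (volume.restrict (Set.Ioi (0 : ℝ))) := by
  obtain ⟨hα0, hα1⟩ := hα
  have hΓ : 0 < Real.Gamma α := Real.Gamma_pos_of_pos hα0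
  have h1α : 0 < 1 - α := by linarith
  have hγ₀pos : 0 < (1-α)/(2*α) := by positivity
  set m : ℝ := min ((1-α)/2) (min ((1-α)/(2*α)) 1) with hmdef
  have hm0 : 0 < m := lt_min (by linarith) (lt_min hγ₀pos one_pos)
  have hm1 : m ≤ 1 := le_trans (min_le_right _ _) (min_le_right _ _)
  refine ⟨m^2 * Real.exp (-1) / (8 * Real.Gamma α),
    by apply div_pos (by positivity) (by positivity), ?_⟩
  intro p q hp hq
  obtain ⟨hp1, hpα⟩ := hp
  have hppos : 0 < p := by linarith
  have hαp : α * p < 1 := by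
    have h := (lt_div_iff₀ hα0).mp hpα
    nlinarith
  set γ : ℝ := p - 1 with hγdef
  set β : ℝ := 1 - α * p with hβdef
  have hγ : 0 < γ := by rw [hγdef]; linarith
  have hβ : 0 < β := by rw [hβdef]; linarith
  have hβ1 : β < 1 := by rw [hβdef]; nlinarith
  have hq1 : 1/q = β/p := by rw [hq, hβdef]; field_simp
  have hqpos : 0 < q := by
    have h1 : 0 < 1/q := by rw [hq1]; positivity
    exact one_div_pos.mp h1
  have hq0 : q ≠ 0 := ne_of_gt hqpos
  have hp0 : p ≠ 0 := ne_of_gt hppos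
  have hqβ : q * β = p := by
    have h := hq1
    field_simp at h
    linarith
  have q_eq : q = p / β := by rw [eq_div_iff hβ.ne']; linarith [hqβ]
  have hq_le_one : 1/q ≤ 1 := by
    rw [hq1, div_le_one hppos]; linarith
  rcases le_or_gt p ((1 + 1/α)/2) with hcase | hcase
  · -- CASE A : p close to 1
    set δ : ℝ := 2 ^ (-(β/γ)) with hδdef
    have hδpos : 0 < δ := Real.rpow_pos_of_pos two_pos _
    have hδ1 : δ < 1 := Real.rpow_lt_one_of_one_lt_of_neg one_lt_two
      (neg_lt_zero.mpr (by positivity))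
    set a : ℝ := 2 - δ with hadef
    set b : ℝ := 2 - δ/2 with hbdef
    have ha : 0 < a := by rw [hadef]; linarith
    have hab : a < b := by rw [hadef, hbdef]; linarith
    have hb2 : b < 2 := by rw [hbdef]; linarith
    have hβm : m ≤ β := by
      have h2 : (1-α)/2 ≤ β := by
        have hα' : α * (1/α) = 1 := mul_one_div_cancel hα0.ne'
        rw [hβdef]
        nlinarith [mul_le_mul_of_nonneg_left hcase hα0.le]
      exact le_trans (min_le_left _ _) h2
    have hnormval : (∫ s in (2-b)..(2-a), s^((0:ℝ)*p)) = δ/2 := by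
      simp only [zero_mul, Real.rpow_zero, hadef, hbdef]
      rw [intervalIntegral.integral_const, smul_eq_mul, mul_one]
      ring
    have hnorm : eLpNorm (Set.indicator (Set.Ioo a b) (fun t => (2-t)^(0:ℝ)))
        (ENNReal.ofReal p) (volume.restrict (Set.Ioi (0:ℝ)))
        = ENNReal.ofReal ((δ/2) ^ (1/p)) := by
      rw [norm_eq ha hab hb2 hppos, hnormval]
    refine ⟨Set.indicator (Set.Ioo a b) (fun t => (2-t)^(0:ℝ)),
      ⟨(Measurable.indicator (by fun_prop) measurableSet_Ioo).aestronglyMeasurable, ?_⟩,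
      norm_ne_zero ha hab hb2 hppos, ?_⟩
    · rw [hnorm]; exact ENNReal.ofReal_lt_top
    set C : ℝ := δ/(4*Real.Gamma α) with hCdef
    have hCpos : 0 < C := by rw [hCdef]; positivity
    -- pointwise lower bound on the window
    have keyA : ∀ x ∈ Set.Ioo (2+δ) 3, C * (x-2)^(α-1)
        ≤ fracInt α (Set.indicator (Set.Ioo a b) (fun t => (2-t)^(0:ℝ))) x := by
      intro x hx
      obtain ⟨hx1, hx2⟩ := hx
      have h2x : (2:ℝ) < x := by linarith
      have hbx : b < x := by rw [hbdef]; linarith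
      simp only [fracInt]
      rw [fracInt_eq_aux ha hab hbx (α-1)]
      have hmono : ∫ t in a..b, (2*(x-2))^(α-1)
          ≤ ∫ t in a..b, (2-t)^(0:ℝ) * (x-t)^(α-1) := by
        apply intervalIntegral.integral_mono_on hab.le intervalIntegrable_const ?_ ?_
        · apply ContinuousOn.intervalIntegrable
          have hcont : ContinuousOn (fun t : ℝ => (x-t)^(α-1)) (Set.uIcc a b) := by
            apply ContinuousOn.rpow_const ((continuous_const.sub continuous_id).continuousOn)
            intro t ht
            rw [Set.uIcc_of_le hab.le] at ht
            exact Or.inl (by simp only [Pi.sub_apply, id]; intro hcontra; nlinarith [ht.2])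
          have : (fun t : ℝ => (2-t)^(0:ℝ) * (x-t)^(α-1)) = fun t : ℝ => (x-t)^(α-1) := by
            funext t; rw [Real.rpow_zero, one_mul]
          rw [this]; exact hcont
        · intro t ht
          rw [Real.rpow_zero, one_mul]
          apply Real.rpow_le_rpow_of_nonpos ?_ ?_ (by linarith)
          · have := ht.2; rw [hbdef] at this; linarith
          · have := ht.1; rw [hadef] at this; linarith
      rw [intervalIntegral.integral_const] at hmono
      have hba : b - a = δ/2 := by rw [hadef, hbdef]; ring
      rw [hba, smul_eq_mul] at hmono
      -- C * (x-2)^(α-1) ≤ (1/Γ) * (δ/2 * (2*(x-2))^(α-1))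
      have hx2pos : (0:ℝ) < (x-2)^(α-1) := Real.rpow_pos_of_pos (by linarith) _
      have h2α : (1:ℝ)/2 ≤ (2:ℝ)^(α-1) := by
        have hh : ((2:ℝ))^(-(1:ℝ)) ≤ (2:ℝ)^(α-1) :=
          Real.rpow_le_rpow_of_exponent_le one_le_two (by linarith)
        rw [Real.rpow_neg (by norm_num), Real.rpow_one] at hh
        linarith
      have hsplit : (2*(x-2))^(α-1) = (2:ℝ)^(α-1) * (x-2)^(α-1) :=
        Real.mul_rpow (by norm_num) (by linarith)
      have step : C * (x-2)^(α-1) ≤ (1/Real.Gamma α) * (δ/2 * (2*(x-2))^(α-1)) := by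
        rw [hsplit, hCdef]
        have h5 : (1:ℝ)/2 * (x-2)^(α-1) ≤ (2:ℝ)^(α-1) * (x-2)^(α-1) :=
          mul_le_mul_of_nonneg_right h2α hx2pos.le
        calc δ/(4*Real.Gamma α) * (x-2)^(α-1)
            = (1/Real.Gamma α) * (δ/2 * ((1:ℝ)/2 * (x-2)^(α-1))) := by field_simp; ring
          _ ≤ (1/Real.Gamma α) * (δ/2 * ((2:ℝ)^(α-1) * (x-2)^(α-1))) := by
              apply mul_le_mul_of_nonneg_left ?_ (by positivity)
              exact mul_le_mul_of_nonneg_left h5 (by positivity)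
      refine step.trans ?_
      exact mul_le_mul_of_nonneg_left hmono (by positivity)
    -- exponent identities
    have eA1 : (α-1)*q + 1 = -(γ/β) := by
      rw [q_eq, hγdef, hβdef]; field_simp [show (1:ℝ) - α*p ≠ 0 from hβ.ne']; ring
    have eA2 : (-(β/γ)) * (-(γ/β)) = 1 := by field_simp
    have eA3 : (-(β/γ)) * (1-1/p) = -(β/p) := by rw [hγdef]; field_simp
    have eA4 : γ/p + -(1-α) = -(1/q) := by
      rw [hq1, hγdef, hβdef]; field_simp; ring
    have hδpow : δ^(-(γ/β)) = 2 := by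
      rw [hδdef, ← Real.rpow_mul (by norm_num : (0:ℝ) ≤ 2), eA2, Real.rpow_one]
    -- lower bound on eLpNorm of fracInt
    have hlow : ENNReal.ofReal (C * (β/γ)^(1/q))
        ≤ eLpNorm (fracInt α (Set.indicator (Set.Ioo a b) (fun t => (2-t)^(0:ℝ))))
          (ENNReal.ofReal q) (volume.restrict (Set.Ioi (0:ℝ))) := by
      refine le_trans ?_ (eLpNorm_lower (by linarith : (0:ℝ) < 2+δ) hqpos keyA)
      have hcongr : ∫⁻ x in Set.Ioo (2+δ) 3, (ENNReal.ofReal (C*(x-2)^(α-1)))^q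
          = ENNReal.ofReal (∫ x in (2+δ)..3, (C*(x-2)^(α-1))^q) := by
        rw [← lint_eq (by linarith) ?_ ?_]
        · apply setLIntegral_congr_fun measurableSet_Ioo ?_
          intro x hx
          have h0 : (0:ℝ) ≤ C*(x-2)^(α-1) :=
            mul_nonneg hCpos.le (Real.rpow_nonneg (by linarith [hx.1]) _)
          exact ENNReal.ofReal_rpow_of_nonneg h0 hqpos.le
        · apply (ContinuousOn.integrableOn_compact
            (isCompact_Icc (a := 2+δ) (b := 3)) ?_).mono_set Set.Ioo_subset_Icc_self
          apply ContinuousOn.rpow_const ?_ (fun x hx => Or.inr hqpos.le)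
          apply ContinuousOn.mul continuousOn_const
          apply ContinuousOn.rpow_const ((continuous_id.sub continuous_const).continuousOn)
          intro x hx
          exact Or.inl (by simp only [Pi.sub_apply, id]; intro hcontra; nlinarith [hx.1])
        · intro x hx
          exact Real.rpow_nonneg (mul_nonneg hCpos.le
            (Real.rpow_nonneg (by linarith [hx.1]) _)) q
      rw [hcongr]
      have hval : (∫ x in (2+δ)..3, (C*(x-2)^(α-1))^q) = C^q * (β/γ) := by
        rw [intervalIntegral.integral_congr
          (g := fun x => C^q * ((x-2)^((α-1)*q))) ?_]
        · rw [intervalIntegral.integral_const_mul,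
            intervalIntegral.integral_comp_sub_right (fun s => s^((α-1)*q)) 2,
            show (2:ℝ)+δ-2 = δ by ring, show (3:ℝ)-2 = 1 by norm_num,
            integral_rpow (Or.inr ⟨?_, Set.notMem_uIcc_of_lt hδpos one_pos⟩)]
          · rw [eA1, Real.one_rpow, hδpow]
            have h12 : ((1:ℝ) - 2)/(-(γ/β)) = β/γ := by
              rw [show ((1:ℝ)-2) = -1 by norm_num, neg_div_neg_eq, one_div_div]
            rw [h12]
          · intro hcontra
            rw [hcontra] at eA1
            norm_num at eA1
            rcases eA1 with h | h
            · exact absurd h hγ.ne'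
            · exact absurd h hβ.ne'
        · intro x hx
          rw [Set.uIcc_of_le (by linarith : (2:ℝ)+δ ≤ 3)] at hx
          have hx2 : (0:ℝ) ≤ x - 2 := by linarith [hx.1]
          show (C * (x-2)^(α-1))^q = C^q * (x-2)^((α-1)*q)
          rw [Real.mul_rpow hCpos.le (Real.rpow_nonneg hx2 _), ← Real.rpow_mul hx2]
      rw [hval]
      rw [ENNReal.ofReal_rpow_of_nonneg
        (mul_nonneg (Real.rpow_nonneg hCpos.le q) (div_nonneg hβ.le hγ.le))
        (by positivity : (0:ℝ) ≤ 1/q)]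
      apply ENNReal.ofReal_le_ofReal
      apply le_of_eq
      have hCq : (C^q)^(1/q) = C := by
        rw [← Real.rpow_mul hCpos.le, mul_one_div_cancel hq0, Real.rpow_one]
      rw [Real.mul_rpow (Real.rpow_nonneg hCpos.le q) (div_nonneg hβ.le hγ.le), hCq]
    -- final assembly
    rw [hnorm]
    refine le_trans ?_ hlow
    rw [← ENNReal.ofReal_mul (by positivity)]
    apply ENNReal.ofReal_le_ofReal
    have step0 : (δ/2)^(1/p) ≤ δ^(1/p) :=
      Real.rpow_le_rpow (by positivity) (by linarith) (by positivity)
    have hKnn : (0:ℝ) ≤ (γ*β)^(-(1-α)) := Real.rpow_nonneg (by positivity) _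
    have hX1 : (1:ℝ)/2 ≤ δ^(1-1/p) := by
      rw [hδdef, ← Real.rpow_mul (by norm_num : (0:ℝ) ≤ 2), eA3]
      have hh : ((2:ℝ))^(-(1:ℝ)) ≤ (2:ℝ)^(-(β/p)) := by
        apply Real.rpow_le_rpow_of_exponent_le one_le_two
        have : β/p ≤ 1 := by rw [div_le_one hppos]; linarith
        linarith
      rw [Real.rpow_neg (by norm_num), Real.rpow_one] at hh
      linarith
    have hY1 : m^2 ≤ β^(1/q+(1-α)) := by
      have h1 : m^2 ≤ β^(2:ℕ) := pow_le_pow_left₀ hm0.le hβm 2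
      have h2 : β^(((2:ℕ)):ℝ) ≤ β^(1/q+(1-α)) := by
        apply Real.rpow_le_rpow_of_exponent_ge hβ hβ1.le
        push_cast
        linarith
      rw [Real.rpow_natCast] at h2
      exact le_trans h1 h2
    have hZ1 : Real.exp (-1) ≤ γ^(γ/p) := by
      rw [show γ/p = (1/p)*γ by ring]
      exact aux_xx hγ (by positivity) (by rw [div_le_one hppos]; linarith)
    have e1 : δ^(1-1/p) * δ^(1/p) = δ := by
      rw [← Real.rpow_add hδpos]
      norm_num
    have e2 : β^(1/q+(1-α)) * β^(-(1-α)) = β^(1/q) := by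
      rw [← Real.rpow_add hβ]
      congr 1
      ring
    have e3 : γ^(γ/p) * γ^(-(1-α)) = (γ^(1/q))⁻¹ := by
      rw [← Real.rpow_add hγ, eA4, Real.rpow_neg hγ.le]
    calc m^2*Real.exp (-1)/(8*Real.Gamma α) * ((γ*β)^(-(1-α))) * ((δ/2)^(1/p))
        ≤ m^2*Real.exp (-1)/(8*Real.Gamma α) * ((γ*β)^(-(1-α))) * (δ^(1/p)) := by
          apply mul_le_mul_of_nonneg_left step0 (by positivity)
      _ ≤ ((1/(4*Real.Gamma α)) * (δ^(1-1/p) * (β^(1/q+(1-α)) * γ^(γ/p))))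
            * ((γ*β)^(-(1-α)) * δ^(1/p)) := by
          rw [show m^2*Real.exp (-1)/(8*Real.Gamma α) * ((γ*β)^(-(1-α))) * (δ^(1/p))
            = (m^2*Real.exp (-1)/(8*Real.Gamma α)) * ((γ*β)^(-(1-α)) * δ^(1/p)) by ring]
          apply mul_le_mul_of_nonneg_right ?_
            (mul_nonneg hKnn (Real.rpow_nonneg hδpos.le _))
          calc m^2*Real.exp (-1)/(8*Real.Gamma α)
              = (1/(4*Real.Gamma α)) * ((1/2) * (m^2 * Real.exp (-1))) := by
                field_simp
                ring
            _ ≤ (1/(4*Real.Gamma α)) * (δ^(1-1/p) * (β^(1/q+(1-α)) * γ^(γ/p))) := by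
                apply mul_le_mul_of_nonneg_left ?_ (by positivity)
                apply mul_le_mul hX1 ?_ (by positivity) (by linarith [hX1])
                exact mul_le_mul hY1 hZ1 (Real.exp_pos _).le
                  (le_trans (by positivity) hY1)
      _ = C*(β/γ)^(1/q) := by
          rw [hCdef, Real.mul_rpow hγ.le hβ.le, Real.div_rpow hβ.le hγ.le,
            show (1/(4*Real.Gamma α)) * (δ^(1-1/p) * (β^(1/q+(1-α)) * γ^(γ/p)))
              * (γ^(-(1-α)) * β^(-(1-α)) * δ^(1/p))
            = (1/(4*Real.Gamma α)) * ((δ^(1-1/p) * δ^(1/p))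
              * ((β^(1/q+(1-α)) * β^(-(1-α))) * (γ^(γ/p) * γ^(-(1-α))))) by ring,
            e1, e2, e3]
          field_simp
  · -- CASE B : p close to 1/α
    set δ : ℝ := 2 ^ (-(γ/β)) with hδdef
    have hδpos : 0 < δ := Real.rpow_pos_of_pos two_pos _
    have hδ1 : δ < 1 := Real.rpow_lt_one_of_one_lt_of_neg one_lt_two
      (neg_lt_zero.mpr (by positivity))
    set r : ℝ := -((1-α)/γ) with hrdef
    set b : ℝ := 2 - δ with hbdef
    have hab : (1:ℝ) < b := by rw [hbdef]; linarith
    have hb2 : b < 2 := by rw [hbdef]; linarith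
    have hγm : m ≤ γ := by
      have hα' : α * (1/α) = 1 := mul_one_div_cancel hα0.ne'
      have h2 : (1-α)/(2*α) ≤ γ := by
        rw [hγdef]
        rw [div_le_iff₀ (by positivity)]
        nlinarith [mul_lt_mul_of_pos_left hcase hα0]
      exact le_trans (le_trans (min_le_right _ _) (min_le_left _ _)) h2
    -- exponent identities
    have eB0 : r*p + 1 = -(β/γ) := by
      rw [hrdef, hγdef, hβdef]; field_simp; ring
    have eB1 : r + (α-1) = r*p := by
      rw [hrdef, hγdef]; field_simp; ring
    have eB2 : (-(γ/β)) * (-(β/γ)) = 1 := by field_simp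
    have eB3 : (-(γ/β)) * (1/q) = -(γ/p) := by
      rw [hq1]; field_simp
    have hδpowB : δ^(-(β/γ)) = 2 := by
      rw [hδdef, ← Real.rpow_mul (by norm_num : (0:ℝ) ≤ 2), eB2, Real.rpow_one]
    have hrp_ne : r*p ≠ -1 := by
      intro hcontra
      rw [hcontra] at eB0
      norm_num at eB0
      rcases eB0 with h | h
      · exact absurd h hβ.ne'
      · exact absurd h hγ.ne'
    have hδint : (∫ s in δ..(1:ℝ), s^(r*p)) = γ/β := by
      rw [integral_rpow (Or.inr ⟨hrp_ne, Set.notMem_uIcc_of_lt hδpos one_pos⟩),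
        eB0, Real.one_rpow, hδpowB,
        show ((1:ℝ) - 2)/(-(β/γ)) = γ/β by
          rw [show ((1:ℝ)-2) = -1 by norm_num, neg_div_neg_eq, one_div_div]]
    have hnormval : (∫ s in (2-b)..(2-(1:ℝ)), s^(r*p)) = γ/β := by
      rw [show (2:ℝ)-b = δ by rw [hbdef]; ring, show (2:ℝ)-(1:ℝ) = 1 by norm_num, hδint]
    have hnorm : eLpNorm (Set.indicator (Set.Ioo 1 b) (fun t => (2-t)^r))
        (ENNReal.ofReal p) (volume.restrict (Set.Ioi (0:ℝ)))
        = ENNReal.ofReal ((γ/β) ^ (1/p)) := by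
      rw [norm_eq one_pos hab hb2 hppos, hnormval]
    refine ⟨Set.indicator (Set.Ioo 1 b) (fun t => (2-t)^r),
      ⟨(Measurable.indicator (by fun_prop) measurableSet_Ioo).aestronglyMeasurable, ?_⟩,
      norm_ne_zero one_pos hab hb2 hppos, ?_⟩
    · rw [hnorm]; exact ENNReal.ofReal_lt_top
    set W : ℝ := (γ/β)/(2*Real.Gamma α) with hWdef
    have hWpos : 0 < W := by rw [hWdef]; positivity
    have keyB : ∀ x ∈ Set.Ioo (2:ℝ) (2+δ), W
        ≤ fracInt α (Set.indicator (Set.Ioo 1 b) (fun t => (2-t)^r)) x := by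
      intro x hx
      obtain ⟨hx1, hx2⟩ := hx
      have hbx : b < x := by rw [hbdef]; linarith
      simp only [fracInt]
      rw [fracInt_eq_aux one_pos hab hbx (α-1)]
      have hcont1 : ContinuousOn (fun t : ℝ => (2-t)^r * (x-t)^(α-1)) (Set.uIcc 1 b) := by
        rw [Set.uIcc_of_le hab.le]
        apply ContinuousOn.mul
        · apply ContinuousOn.rpow_const ((continuous_const.sub continuous_id).continuousOn)
          intro t ht
          refine Or.inl ?_
          simp only [Pi.sub_apply, id]
          intro hcontra
          nlinarith [ht.2]
        · apply ContinuousOn.rpow_const ((continuous_const.sub continuous_id).continuousOn)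
          intro t ht
          refine Or.inl ?_
          simp only [Pi.sub_apply, id]
          intro hcontra
          nlinarith [ht.2]
      have hcont2 : ContinuousOn (fun t : ℝ => (2:ℝ)^(α-1) * (2-t)^(r+(α-1)))
          (Set.uIcc 1 b) := by
        rw [Set.uIcc_of_le hab.le]
        apply ContinuousOn.mul continuousOn_const
        apply ContinuousOn.rpow_const ((continuous_const.sub continuous_id).continuousOn)
        intro t ht
        refine Or.inl ?_
        simp only [Pi.sub_apply, id]
        intro hcontra
        nlinarith [ht.2]
      have hmono : ∫ t in (1:ℝ)..b, (2:ℝ)^(α-1) * (2-t)^(r+(α-1))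
          ≤ ∫ t in (1:ℝ)..b, (2-t)^r * (x-t)^(α-1) := by
        apply intervalIntegral.integral_mono_on hab.le
          (hcont2.intervalIntegrable) (hcont1.intervalIntegrable)
        intro t ht
        have htb : t ≤ b := ht.2
        have h2t : δ ≤ 2 - t := by rw [hbdef] at htb; linarith
        have h2tpos : (0:ℝ) < 2 - t := by linarith
        have hxtpos : (0:ℝ) < x - t := by linarith
        have hxt : (2*(2-t))^(α-1) ≤ (x-t)^(α-1) :=
          Real.rpow_le_rpow_of_nonpos hxtpos (by linarith) (by linarith)
        rw [Real.mul_rpow (by norm_num) h2tpos.le] at hxt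
        rw [Real.rpow_add h2tpos r (α-1)]
        calc (2:ℝ)^(α-1) * ((2-t)^r * (2-t)^(α-1))
            = (2-t)^r * ((2:ℝ)^(α-1) * (2-t)^(α-1)) := by ring
          _ ≤ (2-t)^r * (x-t)^(α-1) :=
              mul_le_mul_of_nonneg_left hxt (Real.rpow_nonneg h2tpos.le r)
      have hval2 : ∫ t in (1:ℝ)..b, (2:ℝ)^(α-1) * (2-t)^(r+(α-1))
          = (2:ℝ)^(α-1) * (γ/β) := by
        rw [intervalIntegral.integral_const_mul,
          intervalIntegral.integral_comp_sub_left (fun s => s^(r+(α-1))) 2,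
          show (2:ℝ)-b = δ by rw [hbdef]; ring, show (2:ℝ)-(1:ℝ) = 1 by norm_num]
        congr 1
        rw [show r+(α-1) = r*p from eB1, hδint]
      rw [hval2] at hmono
      have h2α : (1:ℝ)/2 ≤ (2:ℝ)^(α-1) := by
        have hh : ((2:ℝ))^(-(1:ℝ)) ≤ (2:ℝ)^(α-1) :=
          Real.rpow_le_rpow_of_exponent_le one_le_two (by linarith)
        rw [Real.rpow_neg (by norm_num), Real.rpow_one] at hh
        linarith
      have step : W ≤ (1/Real.Gamma α) * ((2:ℝ)^(α-1) * (γ/β)) := by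
        rw [hWdef]
        calc (γ/β)/(2*Real.Gamma α)
            = (1/Real.Gamma α) * ((1/2) * (γ/β)) := by ring
          _ ≤ (1/Real.Gamma α) * ((2:ℝ)^(α-1) * (γ/β)) := by
              apply mul_le_mul_of_nonneg_left ?_ (by positivity)
              exact mul_le_mul_of_nonneg_right h2α (div_nonneg hγ.le hβ.le)
      refine step.trans ?_
      exact mul_le_mul_of_nonneg_left hmono (by positivity)
    have hlowB : ENNReal.ofReal (W * δ^(1/q))
        ≤ eLpNorm (fracInt α (Set.indicator (Set.Ioo 1 b) (fun t => (2-t)^r)))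
          (ENNReal.ofReal q) (volume.restrict (Set.Ioi (0:ℝ))) := by
      refine le_trans ?_ (eLpNorm_lower (by norm_num : (0:ℝ) < 2) hqpos keyB)
      rw [MeasureTheory.setLIntegral_const,
        Real.volume_Ioo, show (2:ℝ)+δ-2 = δ by ring,
        ENNReal.ofReal_rpow_of_nonneg hWpos.le hqpos.le,
        ← ENNReal.ofReal_mul (Real.rpow_nonneg hWpos.le q),
        ENNReal.ofReal_rpow_of_nonneg
          (mul_nonneg (Real.rpow_nonneg hWpos.le q) hδpos.le)
          (by positivity : (0:ℝ) ≤ 1/q)]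
      apply ENNReal.ofReal_le_ofReal
      apply le_of_eq
      have hWq : (W^q)^(1/q) = W := by
        rw [← Real.rpow_mul hWpos.le, mul_one_div_cancel hq0, Real.rpow_one]
      rw [Real.mul_rpow (Real.rpow_nonneg hWpos.le q) hδpos.le, hWq]
    rw [hnorm]
    refine le_trans ?_ hlowB
    rw [← ENNReal.ofReal_mul (by positivity)]
    apply ENNReal.ofReal_le_ofReal
    have hX1 : (1:ℝ)/2 ≤ δ^(1/q) := by
      rw [hδdef, ← Real.rpow_mul (by norm_num : (0:ℝ) ≤ 2), eB3]
      have hh : ((2:ℝ))^(-(1:ℝ)) ≤ (2:ℝ)^(-(γ/p)) := by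
        apply Real.rpow_le_rpow_of_exponent_le one_le_two
        have : γ/p ≤ 1 := by rw [div_le_one hppos, hγdef]; linarith
        linarith
      rw [Real.rpow_neg (by norm_num), Real.rpow_one] at hh
      linarith
    have hexp_nn : (0:ℝ) ≤ γ/p + (1-α) := by positivity
    have hY1 : m^2 ≤ γ^(γ/p+(1-α)) := by
      rcases le_or_gt γ 1 with hγ1 | hγ1
      · have h1 : m^2 ≤ γ^(2:ℕ) := pow_le_pow_left₀ hm0.le hγm 2
        have h2 : γ^(((2:ℕ)):ℝ) ≤ γ^(γ/p+(1-α)) := by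
          apply Real.rpow_le_rpow_of_exponent_ge hγ hγ1
          push_cast
          have : γ/p ≤ 1 := by rw [div_le_one hppos, hγdef]; linarith
          linarith
        rw [Real.rpow_natCast] at h2
        exact le_trans h1 h2
      · have h1 : m^2 ≤ 1 := pow_le_one₀ hm0.le hm1
        have h2 : (1:ℝ) ≤ γ^(γ/p+(1-α)) := Real.one_le_rpow hγ1.le hexp_nn
        linarith
    have hZ1 : Real.exp (-1) ≤ β^(β/p) := by
      rw [show β/p = (1/p)*β by ring]
      exact aux_xx hβ (by positivity) (by rw [div_le_one hppos]; linarith)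
    have e1B : γ^(γ/p+(1-α)) * (γ^(-(1-α)) * γ^(1/p)) = γ := by
      rw [← Real.rpow_add hγ (-(1-α)) (1/p), ← Real.rpow_add hγ,
        show γ/p+(1-α)+(-(1-α)+1/p) = 1 by rw [hγdef]; field_simp; ring,
        Real.rpow_one]
    have e2B : β^(β/p) * (β^(-(1-α)) * β^(-(1/p))) = β⁻¹ := by
      rw [← Real.rpow_add hβ (-(1-α)) (-(1/p)), ← Real.rpow_add hβ,
        show β/p+(-(1-α)+ -(1/p)) = -1 by rw [hβdef]; field_simp; ring,
        Real.rpow_neg_one]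
    have hKnn : (0:ℝ) ≤ (γ*β)^(-(1-α)) := Real.rpow_nonneg (by positivity) _
    calc m^2*Real.exp (-1)/(8*Real.Gamma α) * ((γ*β)^(-(1-α))) * ((γ/β)^(1/p))
        = (m^2*Real.exp (-1)/(8*Real.Gamma α)) * ((γ*β)^(-(1-α)) * (γ/β)^(1/p)) := by
          ring
      _ ≤ ((1/(2*Real.Gamma α)) * (δ^(1/q) * (γ^(γ/p+(1-α)) * β^(β/p))))
            * ((γ*β)^(-(1-α)) * (γ/β)^(1/p)) := by
          apply mul_le_mul_of_nonneg_right ?_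
            (mul_nonneg hKnn (Real.rpow_nonneg (div_nonneg hγ.le hβ.le) _))
          have hP1 : (1/2) * (m^2 * Real.exp (-1)) ≤ δ^(1/q) * (γ^(γ/p+(1-α)) * β^(β/p)) := by
            apply mul_le_mul hX1 ?_ (by positivity) (le_trans (by norm_num) hX1)
            exact mul_le_mul hY1 hZ1 (Real.exp_pos _).le (le_trans (by positivity) hY1)
          calc m^2*Real.exp (-1)/(8*Real.Gamma α)
              ≤ m^2*Real.exp (-1)/(4*Real.Gamma α) := by
                apply div_le_div_of_nonneg_left (by positivity) (by positivity)
                linarith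
            _ = (1/(2*Real.Gamma α)) * ((1/2) * (m^2 * Real.exp (-1))) := by
                field_simp
                ring
            _ ≤ (1/(2*Real.Gamma α)) * (δ^(1/q) * (γ^(γ/p+(1-α)) * β^(β/p))) :=
                mul_le_mul_of_nonneg_left hP1 (by positivity)
      _ = W * δ^(1/q) := by
          rw [hWdef, Real.mul_rpow hγ.le hβ.le, Real.div_rpow hγ.le hβ.le,
            div_eq_mul_inv (γ^(1/p)), ← Real.rpow_neg hβ.le,
            show (1/(2*Real.Gamma α)) * (δ^(1/q) * (γ^(γ/p+(1-α)) * β^(β/p)))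
              * (γ^(-(1-α)) * β^(-(1-α)) * (γ^(1/p) * β^(-(1/p))))
            = (1/(2*Real.Gamma α)) * δ^(1/q)
              * ((γ^(γ/p+(1-α)) * (γ^(-(1-α)) * γ^(1/p)))
                * (β^(β/p) * (β^(-(1-α)) * β^(-(1/p))))) by ring,
            e1B, e2B]
          field_simp
end

section
/- Let α ∈ (0,1), 0 < h₁ < h₂, Δ = h₂ − h₁, and 1 ≤ p < 1/α. Define φ(x) = 1_{(h₁,∞)}(x) · (x − h₁)^{−α} − 1_{(h₂,∞)}(x) · (x − h₂)^{−α} for x > 0 (this is Γ(1−α) times the Riemann–Liouville fractional derivative of order α of the indicator 1_{(h₁,h₂)}). Then Δ^{1/p − α} · (1 − α p)^{−1/p} ≤ ‖φ‖_{L^p(0,∞)} ≤ 3 · Δ^{1/p − α} · (1 − α p)^{−1/p}. -/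
open MeasureTheory Real Set ENNReal

lemma lint_shift (g : ℝ → ℝ) (hg : Measurable g) (a : ℝ) (s : Set ℝ) (hs : MeasurableSet s) :
    ∫⁻ x in (fun x => x - a) ⁻¹' s, ENNReal.ofReal (g (x - a)) = ∫⁻ x in s, ENNReal.ofReal (g x) :=
  (measurePreserving_sub_right volume a).setLIntegral_comp_preimage hs (hg.ennreal_ofReal)

open intervalIntegral in
lemma lint_rpow_Ioc {r : ℝ} (hr : -1 < r) {c : ℝ} (hc : 0 ≤ c) :
    ∫⁻ x in Ioc 0 c, ENNReal.ofReal (x ^ r) = ENNReal.ofReal (c ^ (r + 1) / (r + 1)) := by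
  rw [← ofReal_integral_eq_lintegral_ofReal]
  · rw [← intervalIntegral.integral_of_le hc, integral_rpow (Or.inl hr),
      Real.zero_rpow (by linarith), sub_zero]
  · exact (intervalIntegrable_iff_integrableOn_Ioc_of_le hc).1
      (intervalIntegrable_rpow' hr)
  · filter_upwards [ae_restrict_mem measurableSet_Ioc] with x hx
    exact Real.rpow_nonneg hx.1.le r

lemma lint_rpow_Ioi {r : ℝ} (hr : r < -1) {c : ℝ} (hc : 0 < c) :
    ∫⁻ x in Ioi c, ENNReal.ofReal (x ^ r) = ENNReal.ofReal (-c ^ (r + 1) / (r + 1)) := by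
  rw [← ofReal_integral_eq_lintegral_ofReal (integrableOn_Ioi_rpow_of_lt hr hc),
    integral_Ioi_rpow_of_lt hr hc]
  filter_upwards [ae_restrict_mem measurableSet_Ioi] with x hx
  exact Real.rpow_nonneg (hc.trans hx).le r

lemma aux_mvt {α a b : ℝ} (hα0 : 0 < α) (hα1 : α ≤ 1) (ha : 0 < a) (hab : a ≤ b) :
    a ^ (-α) - b ^ (-α) ≤ α * (b - a) * a ^ (-α - 1) := by
  have hb : 0 < b := ha.trans_le hab
  set s : ℝ := (b - a) / a with hs
  have hs0 : 0 ≤ s := div_nonneg (by linarith) ha.le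
  have hb' : b = a * (1 + s) := by rw [hs]; field_simp; ring
  have h1 : (1 + s) ^ α ≤ 1 + α * s :=
    rpow_one_add_le_one_add_mul_self (by linarith) hα0.le hα1
  have h1s : (0:ℝ) < 1 + s := by linarith
  have hy : (0:ℝ) < (1 + s) ^ α := Real.rpow_pos_of_pos h1s α
  have h2 : (1 - α * s) ≤ ((1 + s) ^ α)⁻¹ := by
    rw [inv_eq_one_div, le_div_iff₀ hy]
    rcases le_or_gt (1 - α * s) 0 with h | h
    · exact (mul_nonpos_of_nonpos_of_nonneg h hy.le).trans zero_le_one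
    · calc (1 - α * s) * (1 + s) ^ α ≤ (1 - α * s) * (1 + α * s) := by nlinarith
        _ = 1 - (α * s)^2 := by ring
        _ ≤ 1 := by nlinarith
  have h3 : a ^ (-α) * (1 - α * s) ≤ b ^ (-α) := by
    rw [hb', Real.mul_rpow ha.le h1s.le, Real.rpow_neg h1s.le]
    exact mul_le_mul_of_nonneg_left h2 (Real.rpow_nonneg ha.le _)
  have h4 : α * (b - a) * a ^ (-α - 1) = a ^ (-α) * (α * s) := by
    rw [Real.rpow_sub ha, Real.rpow_one, hs]; field_simp
  rw [h4]
  rw [mul_sub, mul_one] at h3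
  linarith


/-- `Γ(1-α)` times the Riemann–Liouville fractional derivative of the indicator
`1_{(h₁,h₂)}`: `φ(x) = 1_{(h₁,∞)}(x)(x-h₁)^{-α} - 1_{(h₂,∞)}(x)(x-h₂)^{-α}`. -/
noncomputable def fracDerivIndicator (α h₁ h₂ : ℝ) (x : ℝ) : ℝ :=
  Set.indicator (Set.Ioi h₁) (fun y => (y - h₁) ^ (-α)) x -
    Set.indicator (Set.Ioi h₂) (fun y => (y - h₂) ^ (-α)) x

/-- Two-sided `L^p(0,∞)` estimate for the fractional derivative of the indicator of
`(h₁,h₂)`: with `Δ = h₂ - h₁`,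
`Δ^{1/p-α} (1-αp)^{-1/p} ≤ ‖φ‖_p ≤ 3 Δ^{1/p-α} (1-αp)^{-1/p}` for `1 ≤ p < 1/α`. -/
theorem stmt_8 (α h₁ h₂ p : ℝ) (hα : α ∈ Set.Ioo (0 : ℝ) 1) (h1 : 0 < h₁)
    (h12 : h₁ < h₂) (hp : 1 ≤ p) (hp2 : p < 1 / α) :
    ENNReal.ofReal ((h₂ - h₁) ^ (1 / p - α) * (1 - α * p) ^ (-(1 / p))) ≤
        eLpNorm (fracDerivIndicator α h₁ h₂) (ENNReal.ofReal p)
          (volume.restrict (Set.Ioi (0 : ℝ))) ∧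
      eLpNorm (fracDerivIndicator α h₁ h₂) (ENNReal.ofReal p)
          (volume.restrict (Set.Ioi (0 : ℝ))) ≤
        ENNReal.ofReal (3 * (h₂ - h₁) ^ (1 / p - α) * (1 - α * p) ^ (-(1 / p))) := by
  obtain ⟨hα0, hα1⟩ := hα
  have hp0 : (0:ℝ) < p := by linarith
  have hΔ : (0:ℝ) < h₂ - h₁ := by linarith
  have hβ : α * p < 1 := by
    have := (lt_div_iff₀ hα0).mp hp2; linarith
  have hβ0 : 0 < α * p := by positivity
  set φ := fracDerivIndicator α h₁ h₂ with hφdef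
  have hx1 : ∀ x : ℝ, x ∈ Ioc h₁ h₂ → φ x = (x - h₁) ^ (-α) := by
    intro x hx
    simp [hφdef, fracDerivIndicator, Set.indicator_apply, Set.mem_Ioi, hx.1, not_lt.2 hx.2]
  have hx2 : ∀ x : ℝ, h₂ < x → φ x = (x - h₁) ^ (-α) - (x - h₂) ^ (-α) := by
    intro x hx
    simp [hφdef, fracDerivIndicator, Set.indicator_apply, Set.mem_Ioi, hx, h12.trans hx]
  have hx0 : ∀ x : ℝ, x ≤ h₁ → φ x = 0 := by
    intro x hx
    simp [hφdef, fracDerivIndicator, Set.indicator_apply, Set.mem_Ioi, not_lt.2 hx,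
      not_lt.2 (hx.trans h12.le)]
  -- real identity for the final exponent algebra
  have hR : ((h₂ - h₁) ^ (1 - α * p) / (1 - α * p)) ^ (1 / p)
      = (h₂ - h₁) ^ (1 / p - α) * (1 - α * p) ^ (-(1 / p)) := by
    rw [Real.div_rpow (Real.rpow_nonneg hΔ.le _) (by linarith), ← Real.rpow_mul hΔ.le,
      show (1 - α * p) * (1 / p) = 1 / p - α by field_simp,
      Real.rpow_neg (by linarith : (0:ℝ) ≤ 1 - α * p), div_eq_mul_inv]
  set I := ∫⁻ x in Ioi (0:ℝ), ENNReal.ofReal (|φ x| ^ p) with hI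
  have hE : eLpNorm φ (ENNReal.ofReal p) (volume.restrict (Ioi 0)) = I ^ (1/p) := by
    rw [eLpNorm_eq_lintegral_rpow_enorm_toReal (ENNReal.ofReal_pos.mpr hp0).ne' ENNReal.ofReal_ne_top,
      ENNReal.toReal_ofReal hp0.le, hI]
    congr 1
    refine lintegral_congr fun x => ?_
    rw [Real.enorm_eq_ofReal_abs, ← ENNReal.ofReal_rpow_of_nonneg (abs_nonneg _) hp0.le]
  -- translated integral computations
  have key : ∀ a : ℝ, ∫⁻ x in Ioc a (a + (h₂ - h₁)), ENNReal.ofReal ((x - a) ^ (-(α * p)))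
      = ENNReal.ofReal ((h₂ - h₁) ^ (1 - α * p) / (1 - α * p)) := by
    intro a
    have hpre : (fun x : ℝ => x - a) ⁻¹' Ioc 0 (h₂ - h₁) = Ioc a (a + (h₂ - h₁)) := by
      ext x
      simp only [Set.mem_preimage, Set.mem_Ioc]
      constructor <;> intro h <;> exact ⟨by linarith [h.1], by linarith [h.2]⟩
    rw [← hpre, lint_shift (fun t => t ^ (-(α * p))) (by fun_prop) a _ measurableSet_Ioc,
      lint_rpow_Ioc (by linarith) hΔ.le, show -(α * p) + 1 = 1 - α * p by ring]
  -- lower bound for I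
  have low : ENNReal.ofReal ((h₂ - h₁) ^ (1 - α * p) / (1 - α * p)) ≤ I := by
    have e1 : Ioc h₁ (h₁ + (h₂ - h₁)) = Ioc h₁ h₂ := by norm_num
    calc ENNReal.ofReal ((h₂ - h₁) ^ (1 - α * p) / (1 - α * p))
        = ∫⁻ x in Ioc h₁ h₂, ENNReal.ofReal ((x - h₁) ^ (-(α * p))) := by
          rw [← key h₁, e1]
      _ = ∫⁻ x in Ioc h₁ h₂, ENNReal.ofReal (|φ x| ^ p) := by
          refine setLIntegral_congr_fun measurableSet_Ioc (fun x hx => ?_)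
          have hxp : (0:ℝ) ≤ x - h₁ := by linarith [hx.1]
          rw [hx1 x hx, abs_of_nonneg (Real.rpow_nonneg hxp _),
            ← Real.rpow_mul hxp, neg_mul]
      _ ≤ I := lintegral_mono' (Measure.restrict_mono (fun x hx => h1.trans hx.1) le_rfl) le_rfl
  constructor
  · rw [hE, ← hR, ← ENNReal.ofReal_rpow_of_nonneg
      (div_nonneg (Real.rpow_nonneg hΔ.le _) (by linarith)) (by positivity)]
    exact ENNReal.rpow_le_rpow low (by positivity)
  · -- upper bound
    set r : ℝ := (-α - 1) * p with hrdef
    have hr : r < -1 := by rw [hrdef]; nlinarith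
    set c : ℝ := (α * (h₂ - h₁)) ^ p with hcdef
    have hc0 : 0 ≤ c := Real.rpow_nonneg (by positivity) p
    set A : ℝ := (h₂ - h₁) ^ (1 - α * p) / (1 - α * p) with hAdef
    have hA0 : 0 ≤ A := div_nonneg (Real.rpow_nonneg hΔ.le _) (by linarith)
    set g1 : ℝ → ℝ≥0∞ := fun x => ENNReal.ofReal ((x - h₁) ^ (-(α * p))) with hg1
    set g2 : ℝ → ℝ≥0∞ := fun x => ENNReal.ofReal ((x - h₂) ^ (-(α * p))) with hg2
    set g3 : ℝ → ℝ≥0∞ := fun x => ENNReal.ofReal (c * (x - h₂) ^ r) with hg3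
    have mg1 : Measurable g1 := by rw [hg1]; fun_prop
    have mg2 : Measurable g2 := by rw [hg2]; fun_prop
    have mg3 : Measurable g3 := by rw [hg3]; fun_prop
    set S1 := Ioc h₁ h₂ with hS1def
    set S2 := Ioc h₂ (h₂ + (h₂ - h₁)) with hS2def
    set S3 := Ioi (h₂ + (h₂ - h₁)) with hS3def
    have hbd : ∀ x : ℝ, ENNReal.ofReal (|φ x| ^ p)
        ≤ S1.indicator g1 x + S2.indicator g2 x + S3.indicator g3 x := by
      intro x
      rcases le_or_gt x h₁ with hc1 | hc1
      · simp [hx0 x hc1, Real.zero_rpow hp0.ne']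
      rcases le_or_gt x h₂ with hc2 | hc2
      · refine le_trans ?_ (le_trans le_self_add le_self_add)
        rw [Set.indicator_of_mem (show x ∈ S1 from ⟨hc1, hc2⟩), hg1]
        apply ENNReal.ofReal_le_ofReal
        have hxp : (0:ℝ) ≤ x - h₁ := by linarith
        rw [hx1 x ⟨hc1, hc2⟩, abs_of_nonneg (Real.rpow_nonneg hxp _), ← Real.rpow_mul hxp,
          neg_mul]
      · have hxh2 : (0:ℝ) < x - h₂ := by linarith
        have hxh1 : (0:ℝ) < x - h₁ := by linarith
        have habs : |φ x| = (x - h₂) ^ (-α) - (x - h₁) ^ (-α) := by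
          have hABle : (x - h₁) ^ (-α) ≤ (x - h₂) ^ (-α) :=
            Real.rpow_le_rpow_of_nonpos hxh2 (by linarith) (by linarith)
          rw [hx2 x hc2, abs_of_nonpos (by linarith), neg_sub]
        rcases le_or_gt x (h₂ + (h₂ - h₁)) with hc3 | hc3
        · refine le_trans (le_trans ?_ le_add_self) le_self_add
          rw [Set.indicator_of_mem (show x ∈ S2 from ⟨hc2, hc3⟩), hg2]
          apply ENNReal.ofReal_le_ofReal
          have h5 : |φ x| ≤ (x - h₂) ^ (-α) := by
            rw [habs]; have := Real.rpow_nonneg hxh1.le (-α); linarith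
          calc |φ x| ^ p ≤ ((x - h₂) ^ (-α)) ^ p :=
                Real.rpow_le_rpow (abs_nonneg _) h5 hp0.le
            _ = (x - h₂) ^ (-(α * p)) := by rw [← Real.rpow_mul hxh2.le, neg_mul]
        · refine le_trans ?_ le_add_self
          rw [Set.indicator_of_mem (show x ∈ S3 from hc3), hg3]
          apply ENNReal.ofReal_le_ofReal
          have h5 : |φ x| ≤ α * (h₂ - h₁) * (x - h₂) ^ (-α - 1) := by
            rw [habs]
            have h6 := aux_mvt hα0 hα1.le hxh2 (by linarith : x - h₂ ≤ x - h₁)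
            calc (x - h₂) ^ (-α) - (x - h₁) ^ (-α)
                ≤ α * ((x - h₁) - (x - h₂)) * (x - h₂) ^ (-α - 1) := h6
              _ = α * (h₂ - h₁) * (x - h₂) ^ (-α - 1) := by ring_nf
          calc |φ x| ^ p ≤ (α * (h₂ - h₁) * (x - h₂) ^ (-α - 1)) ^ p :=
                Real.rpow_le_rpow (abs_nonneg _) h5 hp0.le
            _ = c * (x - h₂) ^ r := by
                rw [Real.mul_rpow (by positivity) (Real.rpow_nonneg hxh2.le _),
                  ← Real.rpow_mul hxh2.le, hcdef, hrdef]
    have up1 : I ≤ (∫⁻ x, S1.indicator g1 x) + (∫⁻ x, S2.indicator g2 x)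
        + (∫⁻ x, S3.indicator g3 x) := by
      calc I ≤ ∫⁻ x in Ioi 0, (S1.indicator g1 x + S2.indicator g2 x + S3.indicator g3 x) :=
            lintegral_mono hbd
        _ ≤ ∫⁻ x, (S1.indicator g1 x + S2.indicator g2 x + S3.indicator g3 x) :=
            lintegral_mono' Measure.restrict_le_self le_rfl
        _ = _ := by
            rw [lintegral_add_right _ (mg3.indicator measurableSet_Ioi),
              lintegral_add_right _ (mg2.indicator measurableSet_Ioc)]
    have T1 : ∫⁻ x, S1.indicator g1 x = ENNReal.ofReal A := by
      rw [lintegral_indicator measurableSet_Ioc,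
        show Ioc h₁ h₂ = Ioc h₁ (h₁ + (h₂ - h₁)) by norm_num]
      exact key h₁
    have T2 : ∫⁻ x, S2.indicator g2 x = ENNReal.ofReal A := by
      rw [lintegral_indicator measurableSet_Ioc]
      exact key h₂
    have T3 : ∫⁻ x, S3.indicator g3 x
        = ENNReal.ofReal c * ENNReal.ofReal (-(h₂ - h₁) ^ (r + 1) / (r + 1)) := by
      rw [lintegral_indicator measurableSet_Ioi]
      have hpre : (fun x : ℝ => x - h₂) ⁻¹' Ioi (h₂ - h₁) = S3 := by
        rw [hS3def]; ext x
        simp only [Set.mem_preimage, Set.mem_Ioi]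
        constructor <;> intro h <;> linarith
      calc ∫⁻ x in S3, g3 x
          = ∫⁻ x in S3, ENNReal.ofReal c * ENNReal.ofReal ((x - h₂) ^ r) := by
            exact lintegral_congr fun x => ENNReal.ofReal_mul hc0
        _ = ENNReal.ofReal c * ∫⁻ x in S3, ENNReal.ofReal ((x - h₂) ^ r) :=
            lintegral_const_mul _ (by fun_prop)
        _ = ENNReal.ofReal c * ENNReal.ofReal (-(h₂ - h₁) ^ (r + 1) / (r + 1)) := by
            rw [← hpre, lint_shift (fun t => t ^ r) (by fun_prop) h₂ _ measurableSet_Ioi,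
              lint_rpow_Ioi hr hΔ]
    have hD0 : 0 ≤ -(h₂ - h₁) ^ (r + 1) / (r + 1) := by
      rw [div_nonneg_iff]
      exact Or.inr ⟨neg_nonpos.mpr (Real.rpow_nonneg hΔ.le _), by linarith⟩
    have hcD : c * (-(h₂ - h₁) ^ (r + 1) / (r + 1)) ≤ A := by
      have hαp : α ^ p ≤ α := by
        calc α ^ p ≤ α ^ (1:ℝ) := Real.rpow_le_rpow_of_exponent_ge hα0 hα1.le hp
          _ = α := Real.rpow_one α
      have hden : 0 < (α + 1) * p - 1 := by nlinarith
      have hcval : c = α ^ p * (h₂ - h₁) ^ p := Real.mul_rpow hα0.le hΔ.le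
      have hmerge : (h₂ - h₁) ^ p * (h₂ - h₁) ^ (r + 1) = (h₂ - h₁) ^ (1 - α * p) := by
        rw [← Real.rpow_add hΔ, hrdef]; ring_nf
      have hDval : -(h₂ - h₁) ^ (r + 1) / (r + 1) = (h₂ - h₁) ^ (r + 1) / ((α + 1) * p - 1) := by
        rw [show (α + 1) * p - 1 = -(r + 1) by rw [hrdef]; ring, div_neg, neg_div]
      rw [hcval, hDval, hAdef, ← mul_div_assoc]
      rw [div_le_div_iff₀ hden (by linarith)]
      have h6 : α ^ p * (1 - α * p) ≤ (α + 1) * p - 1 := by nlinarith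
      have h7 : (0:ℝ) ≤ (h₂ - h₁) ^ (1 - α * p) := Real.rpow_nonneg hΔ.le _
      calc α ^ p * (h₂ - h₁) ^ p * (h₂ - h₁) ^ (r + 1) * (1 - α * p)
          = ((h₂ - h₁) ^ p * (h₂ - h₁) ^ (r + 1)) * (α ^ p * (1 - α * p)) := by ring
        _ = (h₂ - h₁) ^ (1 - α * p) * (α ^ p * (1 - α * p)) := by rw [hmerge]
        _ ≤ (h₂ - h₁) ^ (1 - α * p) * ((α + 1) * p - 1) := by
            exact mul_le_mul_of_nonneg_left h6 h7
    have up2 : I ≤ ENNReal.ofReal (3 * A) := by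
      calc I ≤ ENNReal.ofReal A + ENNReal.ofReal A
            + ENNReal.ofReal c * ENNReal.ofReal (-(h₂ - h₁) ^ (r + 1) / (r + 1)) := by
            exact up1.trans (le_of_eq (by rw [T1, T2, T3]))
        _ = ENNReal.ofReal (A + A + c * (-(h₂ - h₁) ^ (r + 1) / (r + 1))) := by
            rw [← ENNReal.ofReal_mul hc0, ← ENNReal.ofReal_add hA0 hA0,
              ← ENNReal.ofReal_add (by linarith) (mul_nonneg hc0 hD0)]
        _ ≤ ENNReal.ofReal (3 * A) := ENNReal.ofReal_le_ofReal (by linarith)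
    rw [hE]
    have h1p : 1 / p ≤ 1 := by rw [div_le_one hp0]; exact hp
    calc I ^ (1 / p) ≤ (ENNReal.ofReal (3 * A)) ^ (1 / p) :=
          ENNReal.rpow_le_rpow up2 (by positivity)
      _ = ENNReal.ofReal ((3 * A) ^ (1 / p)) :=
          (ENNReal.ofReal_rpow_of_nonneg (by linarith : (0:ℝ) ≤ 3 * A)
            (by positivity : (0:ℝ) ≤ 1 / p))
      _ ≤ ENNReal.ofReal (3 * (h₂ - h₁) ^ (1 / p - α) * (1 - α * p) ^ (-(1 / p))) := by
          apply ENNReal.ofReal_le_ofReal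
          rw [Real.mul_rpow (by norm_num) hA0, hR, mul_assoc]
          refine mul_le_mul_of_nonneg_right ?_
            (mul_nonneg (Real.rpow_nonneg hΔ.le _) (Real.rpow_nonneg (by linarith) _))
          calc (3:ℝ) ^ (1 / p) ≤ 3 ^ (1:ℝ) :=
              Real.rpow_le_rpow_of_exponent_le (by norm_num) h1p
            _ = 3 := Real.rpow_one 3
end

section
/- Let α ∈ (0,1), h > 0, n ≥ 1, let a₁, …, a_n > 0 be such that the intervals A_k = (a_k, a_k + h) are pairwise disjoint, and let c₁, …, c_n be real numbers. Set f(x) = Σ_{k=1}^n c_k 1_{A_k}(x) and let Φ(x) = Σ_{k=1}^n c_k [ 1_{(a_k,∞)}(x)(x − a_k)^{−α} − 1_{(a_k + h,∞)}(x)(x − a_k − h)^{−α} ], so that Φ = Γ(1−α) · D^α[f]. Then for every p with 1 ≤ p < 1/α one has ‖Φ‖_{L^p(0,∞)} ≤ 3 · h^{1/p − α} · (1 − α p)^{−1/p} · Σ_{k=1}^n |c_k| = 3 · h^{1/p − α − 1} · (1 − α p)^{−1/p} · ‖f‖_{L^1(0,∞)}. -/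
open MeasureTheory Real Set ENNReal

lemma my_shift (c : ℝ) (f : ℝ → ℝ≥0∞) (s : Set ℝ) :
    ∫⁻ x in s, f x = ∫⁻ x in (· + c) ⁻¹' s, f (x + c) :=
  ((measurePreserving_add_right volume c).setLIntegral_comp_preimage_emb
    (MeasurableEquiv.addRight c).measurableEmbedding f s).symm

lemma my_lint_Ioc {r h : ℝ} (hr : -1 < r) (hh : 0 < h) :
    ∫⁻ x in Ioc (0:ℝ) h, ENNReal.ofReal (x ^ r) = ENNReal.ofReal (h ^ (r+1) / (r+1)) := by
  have hint : IntegrableOn (fun x : ℝ => x ^ r) (Ioc (0:ℝ) h) := by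
    rw [← intervalIntegrable_iff_integrableOn_Ioc_of_le hh.le]
    exact intervalIntegral.intervalIntegrable_rpow' hr
  rw [← ofReal_integral_eq_lintegral_ofReal hint ?_]
  · congr 1
    rw [← intervalIntegral.integral_of_le hh.le, integral_rpow (Or.inl hr),
      Real.zero_rpow (by linarith), sub_zero]
  · filter_upwards [ae_restrict_mem measurableSet_Ioc] with x hx
    exact Real.rpow_nonneg hx.1.le r

lemma my_lint_Ioi {s h : ℝ} (hs : s < -1) (hh : 0 < h) :
    ∫⁻ x in Ioi h, ENNReal.ofReal (x ^ s) = ENNReal.ofReal (h ^ (s+1) / (-(s+1))) := by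
  rw [← ofReal_integral_eq_lintegral_ofReal (integrableOn_Ioi_rpow_of_lt hs hh) ?_]
  · rw [integral_Ioi_rpow_of_lt hs hh]
    congr 1
    rw [div_neg, neg_div]
  · filter_upwards [ae_restrict_mem measurableSet_Ioi] with x hx
    exact Real.rpow_nonneg (hh.trans hx).le s

lemma my_bernoulli {α t h : ℝ} (ht : 0 < t) (hh : 0 ≤ h) (hα0 : 0 ≤ α) (hα1 : α ≤ 1) :
    t ^ (-α) - (t + h) ^ (-α) ≤ α * h * t ^ (-α - 1) := by
  set u := h / t with hu
  have hu0 : 0 ≤ u := div_nonneg hh ht.le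
  have hth : t + h = t * (1 + u) := by rw [hu]; field_simp
  have hb : (1 + u) ^ α ≤ 1 + α * u :=
    rpow_one_add_le_one_add_mul_self (by linarith) hα0 hα1
  have h1u : (0:ℝ) < 1 + u := by linarith
  have hkey : 1 - α * u ≤ (1 + u) ^ (-α) := by
    rcases le_or_gt (1 - α * u) 0 with hc | hc
    · exact hc.trans (Real.rpow_nonneg h1u.le _)
    · rw [Real.rpow_neg h1u.le, ← one_div, le_div_iff₀ (Real.rpow_pos_of_pos h1u α)]
      nlinarith [hb, mul_nonneg (mul_nonneg hα0 hu0) (mul_nonneg hα0 hu0)]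
  have hsplit : (t + h) ^ (-α) = t ^ (-α) * (1 + u) ^ (-α) := by
    rw [hth, Real.mul_rpow ht.le h1u.le]
  have htpos : 0 < t ^ (-α) := Real.rpow_pos_of_pos ht _
  have hlast : t ^ (-α - 1) = t ^ (-α) / t := by
    rw [sub_eq_add_neg, Real.rpow_add ht, Real.rpow_neg_one]; ring
  rw [hsplit, hlast]
  have : t ^ (-α) * (1 - α * u) ≤ t ^ (-α) * (1 + u) ^ (-α) :=
    mul_le_mul_of_nonneg_left hkey htpos.le
  have hu' : α * u * t ^ (-α) = α * h * (t ^ (-α) / t) := by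
    rw [hu]; field_simp
  nlinarith [this]

lemma my_ofReal_rpow {t : ℝ} (ht : 0 ≤ t) (β q : ℝ) (hq : 0 ≤ q) :
    ENNReal.ofReal (t ^ β) ^ q = ENNReal.ofReal (t ^ (β * q)) := by
  rw [ENNReal.ofReal_rpow_of_nonneg (Real.rpow_nonneg ht β) hq, ← Real.rpow_mul ht]

lemma my_bump (α p h a : ℝ) (hα0 : 0 < α) (hα1 : α < 1) (hh : 0 < h) (hp : 1 ≤ p)
    (hap : α * p < 1) :
    ∫⁻ x : ℝ, (‖(Ioi a).indicator (fun y => (y - a) ^ (-α)) x -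
        (Ioi (a + h)).indicator (fun y => (y - (a + h)) ^ (-α)) x‖₊ : ℝ≥0∞) ^ p ≤
      ENNReal.ofReal (3 * (h ^ (1 - α * p) / (1 - α * p))) := by
  have hp0 : (0:ℝ) < p := lt_of_lt_of_le one_pos hp
  set F1 : ℝ → ℝ≥0∞ := (Ioc a (a+h)).indicator
    (fun x => ENNReal.ofReal ((x - a) ^ (-(α*p)))) with hF1
  set F2 : ℝ → ℝ≥0∞ := (Ioc (a+h) (a+2*h)).indicator
    (fun x => ENNReal.ofReal ((x - (a+h)) ^ (-(α*p)))) with hF2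
  set F3 : ℝ → ℝ≥0∞ := (Ioi (a+2*h)).indicator
    (fun x => ENNReal.ofReal ((α*h) ^ p * (x - (a+h)) ^ (-((α+1)*p)))) with hF3
  have hm1 : Measurable F1 := by
    apply Measurable.indicator _ measurableSet_Ioc
    fun_prop
  have hm2 : Measurable F2 := by
    apply Measurable.indicator _ measurableSet_Ioc
    fun_prop
  have hm3 : Measurable F3 := by
    apply Measurable.indicator _ measurableSet_Ioi
    fun_prop
  have ptwise : ∀ x : ℝ, (‖(Ioi a).indicator (fun y => (y - a) ^ (-α)) x -
      (Ioi (a + h)).indicator (fun y => (y - (a + h)) ^ (-α)) x‖₊ : ℝ≥0∞) ^ p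
      ≤ F1 x + F2 x + F3 x := by
    intro x
    rcases le_or_gt x a with hxa | hxa
    · rw [indicator_of_notMem (by simpa using hxa),
        indicator_of_notMem (by simp; linarith)]
      simp [ENNReal.zero_rpow_of_pos hp0]
    rcases le_or_gt x (a + h) with hxh | hxh
    · rw [indicator_of_mem (mem_Ioi.2 hxa), indicator_of_notMem (by simpa using hxh),
        sub_zero]
      have hxa' : (0:ℝ) < x - a := by linarith
      have : (‖(x - a) ^ (-α)‖₊ : ℝ≥0∞) ^ p = F1 x := by
        rw [hF1, indicator_of_mem (mem_Ioc.2 ⟨hxa, hxh⟩)]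
        rw [← enorm_eq_nnnorm, Real.enorm_eq_ofReal (Real.rpow_nonneg hxa'.le _),
          my_ofReal_rpow hxa'.le _ _ hp0.le]
        congr 1
        ring_nf
      rw [this]
      exact le_self_add.trans le_self_add
    · rw [indicator_of_mem (mem_Ioi.2 (by linarith : a < x)),
        indicator_of_mem (mem_Ioi.2 hxh)]
      have ht0 : (0:ℝ) < x - (a + h) := by linarith
      have hmono : (x - a) ^ (-α) ≤ (x - (a + h)) ^ (-α) :=
        Real.rpow_le_rpow_of_nonpos ht0 (by linarith) (by linarith)
      have henorm : (‖(x - a) ^ (-α) - (x - (a + h)) ^ (-α)‖₊ : ℝ≥0∞) =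
          ENNReal.ofReal ((x - (a + h)) ^ (-α) - (x - a) ^ (-α)) := by
        rw [← enorm_eq_nnnorm, Real.enorm_eq_ofReal_abs, abs_sub_comm, abs_of_nonneg (by linarith)]
      rw [henorm]
      rcases le_or_gt x (a + 2*h) with hx2 | hx2
      · have hb : (x - (a + h)) ^ (-α) - (x - a) ^ (-α) ≤ (x - (a + h)) ^ (-α) := by
          have := Real.rpow_nonneg (by linarith : (0:ℝ) ≤ x - a) (-α)
          linarith
        have : ENNReal.ofReal ((x - (a + h)) ^ (-α) - (x - a) ^ (-α)) ^ p ≤ F2 x := by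
          rw [hF2, indicator_of_mem (mem_Ioc.2 ⟨hxh, hx2⟩)]
          calc ENNReal.ofReal ((x - (a + h)) ^ (-α) - (x - a) ^ (-α)) ^ p
              ≤ ENNReal.ofReal ((x - (a + h)) ^ (-α)) ^ p :=
                ENNReal.rpow_le_rpow (ENNReal.ofReal_le_ofReal hb) hp0.le
            _ = ENNReal.ofReal ((x - (a+h)) ^ (-(α*p))) := by
                rw [my_ofReal_rpow ht0.le _ _ hp0.le]
                congr 1
                ring_nf
        exact this.trans (le_add_self.trans le_self_add)
      · have hb : (x - (a + h)) ^ (-α) - (x - a) ^ (-α) ≤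
            α * h * (x - (a + h)) ^ (-α - 1) := by
          have := my_bernoulli (α := α) (t := x - (a+h)) (h := h) ht0 hh.le hα0.le hα1.le
          have hxx : x - (a + h) + h = x - a := by ring
          rwa [hxx] at this
        have : ENNReal.ofReal ((x - (a + h)) ^ (-α) - (x - a) ^ (-α)) ^ p ≤ F3 x := by
          rw [hF3, indicator_of_mem (mem_Ioi.2 hx2)]
          calc ENNReal.ofReal ((x - (a + h)) ^ (-α) - (x - a) ^ (-α)) ^ p
              ≤ ENNReal.ofReal (α * h * (x - (a + h)) ^ (-α - 1)) ^ p :=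
                ENNReal.rpow_le_rpow (ENNReal.ofReal_le_ofReal hb) hp0.le
            _ = ENNReal.ofReal ((α*h) ^ p * (x - (a+h)) ^ (-((α+1)*p))) := by
                rw [ENNReal.ofReal_rpow_of_nonneg
                    (mul_nonneg (mul_nonneg hα0.le hh.le) (Real.rpow_nonneg ht0.le _)) hp0.le,
                  Real.mul_rpow (mul_nonneg hα0.le hh.le) (Real.rpow_nonneg ht0.le _),
                  ← Real.rpow_mul ht0.le,
                  show (-α - 1) * p = -((α+1)*p) by ring]
        exact this.trans le_add_self
  have hq1 : α * p < 1 := hap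
  have h1q : (0:ℝ) < 1 - α * p := by linarith
  have hIF1 : ∫⁻ x, F1 x = ENNReal.ofReal (h ^ (1 - α * p) / (1 - α * p)) := by
    rw [hF1, lintegral_indicator measurableSet_Ioc, my_shift a]
    have hpre : (· + a) ⁻¹' Ioc a (a + h) = Ioc 0 h := by
      ext y; simp only [mem_preimage, mem_Ioc]
      constructor <;> intro hy <;> constructor <;> linarith [hy.1, hy.2]
    rw [hpre]
    simp_rw [add_sub_cancel_right]
    rw [my_lint_Ioc (by linarith) hh, neg_add_eq_sub]
  have hIF2 : ∫⁻ x, F2 x = ENNReal.ofReal (h ^ (1 - α * p) / (1 - α * p)) := by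
    rw [hF2, lintegral_indicator measurableSet_Ioc, my_shift (a + h)]
    have hpre : (· + (a + h)) ⁻¹' Ioc (a + h) (a + 2 * h) = Ioc 0 h := by
      ext y; simp only [mem_preimage, mem_Ioc]
      constructor <;> intro hy <;> constructor <;> linarith [hy.1, hy.2]
    rw [hpre]
    simp_rw [add_sub_cancel_right]
    rw [my_lint_Ioc (by linarith) hh, neg_add_eq_sub]
  have hs1 : -((α + 1) * p) < -1 := by nlinarith
  have hIF3 : ∫⁻ x, F3 x = ENNReal.ofReal ((α * h) ^ p) *
      ENNReal.ofReal (h ^ (-((α + 1) * p) + 1) / (-(-((α + 1) * p) + 1))) := by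
    rw [hF3, lintegral_indicator measurableSet_Ioi, my_shift (a + h)]
    have hpre : (· + (a + h)) ⁻¹' Ioi (a + 2 * h) = Ioi h := by
      ext y; simp only [mem_preimage, mem_Ioi]
      constructor <;> intro hy <;> linarith
    rw [hpre]
    simp_rw [add_sub_cancel_right,
      ENNReal.ofReal_mul (Real.rpow_nonneg (mul_nonneg hα0.le hh.le) p)]
    rw [lintegral_const_mul _ (by fun_prop), my_lint_Ioi hs1 hh]
  calc ∫⁻ x : ℝ, (‖(Ioi a).indicator (fun y => (y - a) ^ (-α)) x -
        (Ioi (a + h)).indicator (fun y => (y - (a + h)) ^ (-α)) x‖₊ : ℝ≥0∞) ^ p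
      ≤ ∫⁻ x, (F1 x + F2 x + F3 x) := lintegral_mono ptwise
    _ = (∫⁻ x, F1 x) + (∫⁻ x, F2 x) + ∫⁻ x, F3 x := by
        rw [lintegral_add_left (f := fun x => F1 x + F2 x) (hm1.add hm2), lintegral_add_left hm1]
    _ ≤ ENNReal.ofReal (3 * (h ^ (1 - α * p) / (1 - α * p))) := by
        have hα_p : α ^ p ≤ α := by
          calc α ^ p ≤ α ^ (1:ℝ) := Real.rpow_le_rpow_of_exponent_ge hα0 hα1.le hp
            _ = α := Real.rpow_one α
        have hD : (0:ℝ) < (α + 1) * p - 1 := by nlinarith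
        have hmul : (α * h) ^ p = α ^ p * h ^ p := Real.mul_rpow hα0.le hh.le
        have hhp : h ^ p * h ^ (-((α + 1) * p) + 1) = h ^ (1 - α * p) := by
          rw [← Real.rpow_add hh]
          congr 1; ring
        have hpow_pos : (0:ℝ) < h ^ (1 - α * p) := Real.rpow_pos_of_pos hh _
        have hkey : α ^ p * (1 - α * p) ≤ (α + 1) * p - 1 := by
          nlinarith [mul_nonneg (sub_nonneg.2 hα_p) h1q.le, hα0.le]
        have hneg : -(-((α + 1) * p) + 1) = (α + 1) * p - 1 := by ring
        have hC : (0:ℝ) ≤ h ^ (-((α + 1) * p) + 1) / ((α + 1) * p - 1) :=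
          div_nonneg (Real.rpow_nonneg hh.le _) hD.le
        rw [hIF1, hIF2, hIF3, hneg,
          ← ENNReal.ofReal_mul (Real.rpow_nonneg (mul_nonneg hα0.le hh.le) p),
          ← ENNReal.ofReal_add (by positivity) (by positivity),
          ← ENNReal.ofReal_add (by positivity)
            (mul_nonneg (Real.rpow_nonneg (mul_nonneg hα0.le hh.le) p) hC)]
        apply ENNReal.ofReal_le_ofReal
        rw [hmul]
        have h3 : α ^ p * h ^ p * (h ^ (-((α + 1) * p) + 1) / ((α + 1) * p - 1)) ≤
            h ^ (1 - α * p) / (1 - α * p) := by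
          have heq : α ^ p * h ^ p * (h ^ (-((α + 1) * p) + 1) / ((α + 1) * p - 1)) =
              α ^ p * h ^ (1 - α * p) / ((α + 1) * p - 1) := by
            rw [← hhp]; ring
          rw [heq, div_le_div_iff₀ hD h1q]
          nlinarith [mul_le_mul_of_nonneg_left hkey hpow_pos.le]
        linarith


/-- `L^p` estimate for the fractional derivative of a very simple (stepwise) function
`f = Σ c_k 1_{(a_k, a_k+h)}` with pairwise disjoint intervals of common length `h`:
`‖Γ(1-α) D^α f‖_p ≤ 3 h^{1/p-α} (1-αp)^{-1/p} Σ|c_k|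
  = 3 h^{1/p-α-1} (1-αp)^{-1/p} ‖f‖_1` for `1 ≤ p < 1/α`. -/
theorem stmt_10 (α h : ℝ) (hα : α ∈ Set.Ioo (0 : ℝ) 1) (hh : 0 < h)
    (n : ℕ) (hn : 1 ≤ n) (a c : Fin n → ℝ) (ha : ∀ k, 0 < a k)
    (hdisj : Pairwise fun i j =>
      Disjoint (Set.Ioo (a i) (a i + h)) (Set.Ioo (a j) (a j + h)))
    (p : ℝ) (hp : 1 ≤ p) (hp2 : p < 1 / α) :
    let f : ℝ → ℝ := fun x =>
      ∑ k, c k * Set.indicator (Set.Ioo (a k) (a k + h)) (fun _ => (1 : ℝ)) x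
    let Φ : ℝ → ℝ := fun x =>
      ∑ k, c k * (Set.indicator (Set.Ioi (a k)) (fun y => (y - a k) ^ (-α)) x -
        Set.indicator (Set.Ioi (a k + h)) (fun y => (y - (a k + h)) ^ (-α)) x)
    eLpNorm Φ (ENNReal.ofReal p) (volume.restrict (Set.Ioi (0 : ℝ))) ≤
        ENNReal.ofReal
          (3 * h ^ (1 / p - α) * (1 - α * p) ^ (-(1 / p)) * ∑ k, |c k|) ∧
      ENNReal.ofReal (3 * h ^ (1 / p - α) * (1 - α * p) ^ (-(1 / p)) * ∑ k, |c k|) =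
        ENNReal.ofReal (3 * h ^ (1 / p - α - 1) * (1 - α * p) ^ (-(1 / p))) *
          eLpNorm f 1 (volume.restrict (Set.Ioi (0 : ℝ))) := by
  obtain ⟨hα0, hα1⟩ := hα
  have hp0 : (0:ℝ) < p := lt_of_lt_of_le one_pos hp
  have hap : α * p < 1 := by
    have := mul_lt_mul_of_pos_left hp2 hα0
    rwa [mul_one_div, div_self hα0.ne'] at this
  have h1q : (0:ℝ) < 1 - α * p := by linarith
  intro f Φ
  have hfd : f = fun x =>
      ∑ k, c k * Set.indicator (Set.Ioo (a k) (a k + h)) (fun _ => (1 : ℝ)) x := rfl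
  have hΦd : Φ = fun x =>
      ∑ k, c k * (Set.indicator (Set.Ioi (a k)) (fun y => (y - a k) ^ (-α)) x -
        Set.indicator (Set.Ioi (a k + h)) (fun y => (y - (a k + h)) ^ (-α)) x) := rfl
  -- the single bump functions
  set g : Fin n → ℝ → ℝ := fun k x =>
    Set.indicator (Set.Ioi (a k)) (fun y => (y - a k) ^ (-α)) x -
      Set.indicator (Set.Ioi (a k + h)) (fun y => (y - (a k + h)) ^ (-α)) x with hg
  have hgm : ∀ k, Measurable (g k) := by
    intro k
    apply Measurable.sub <;>
      exact Measurable.indicator (by fun_prop) measurableSet_Ioi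
  set K : ℝ := 3 * h ^ (1 / p - α) * (1 - α * p) ^ (-(1 / p)) with hK
  have hK0 : 0 ≤ K := by positivity
  -- the `L^1` norm of `f`
  have hf1 : eLpNorm f 1 (volume.restrict (Set.Ioi (0:ℝ))) =
      ENNReal.ofReal (h * ∑ k, |c k|) := by
    rw [eLpNorm_one_eq_lintegral_enorm]; simp only [enorm_eq_nnnorm]
    have hpt : ∀ x : ℝ, (‖f x‖₊ : ℝ≥0∞) =
        ∑ k, ENNReal.ofReal |c k| *
          (Set.Ioo (a k) (a k + h)).indicator (fun _ => (1:ℝ≥0∞)) x := by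
      intro x
      by_cases hx : ∃ k, x ∈ Set.Ioo (a k) (a k + h)
      · obtain ⟨k0, hk0⟩ := hx
        have hother : ∀ j, j ≠ k0 → x ∉ Set.Ioo (a j) (a j + h) := fun j hj hxj =>
          Set.disjoint_left.mp (hdisj hj) hxj hk0
        have hfx : f x = c k0 := by
          simp only [hfd]
          rw [Finset.sum_eq_single k0]
          · rw [Set.indicator_of_mem hk0, mul_one]
          · intro j _ hj
            rw [Set.indicator_of_notMem (hother j hj), mul_zero]
          · intro hk; exact absurd (Finset.mem_univ k0) hk
        rw [hfx, Finset.sum_eq_single k0]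
        · rw [Set.indicator_of_mem hk0, mul_one, ← enorm_eq_nnnorm, Real.enorm_eq_ofReal_abs]
        · intro j _ hj
          rw [Set.indicator_of_notMem (hother j hj), mul_zero]
        · intro hk; exact absurd (Finset.mem_univ k0) hk
      · push_neg at hx
        have hfx : f x = 0 := by
          simp only [hfd]
          apply Finset.sum_eq_zero
          intro j _
          rw [Set.indicator_of_notMem (hx j), mul_zero]
        rw [hfx, Finset.sum_eq_zero]
        · simp
        · intro j _
          rw [Set.indicator_of_notMem (hx j), mul_zero]
    simp_rw [hpt]
    rw [lintegral_finset_sum _ (fun k _ => by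
      exact Measurable.const_mul (Measurable.indicator measurable_const measurableSet_Ioo) _)]
    have hterm : ∀ k : Fin n,
        ∫⁻ x in Set.Ioi (0:ℝ), ENNReal.ofReal |c k| *
          (Set.Ioo (a k) (a k + h)).indicator (fun _ => (1:ℝ≥0∞)) x =
          ENNReal.ofReal |c k| * ENNReal.ofReal h := by
      intro k
      rw [lintegral_const_mul _ (Measurable.indicator measurable_const measurableSet_Ioo)]
      congr 1
      rw [lintegral_indicator measurableSet_Ioo]
      simp only [lintegral_one, Measure.restrict_restrict measurableSet_Ioo,
        Measure.restrict_apply MeasurableSet.univ, Set.univ_inter]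
      have hsub : Set.Ioo (a k) (a k + h) ∩ Set.Ioi (0:ℝ) = Set.Ioo (a k) (a k + h) := by
        apply Set.inter_eq_left.mpr
        intro x hx
        exact lt_trans (ha k) hx.1
      rw [hsub, Real.volume_Ioo, add_sub_cancel_left]
    simp_rw [hterm]
    rw [← Finset.sum_mul, ← ENNReal.ofReal_sum_of_nonneg (fun k _ => abs_nonneg (c k)),
      ← ENNReal.ofReal_mul (Finset.sum_nonneg fun k _ => abs_nonneg (c k))]
    rw [mul_comm]
  constructor
  · -- the main estimate
    have hΦsum : Φ = ∑ k, (c k • g k) := by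
      funext x
      rw [hΦd, Finset.sum_apply]
      simp [hg, smul_eq_mul]
    have hmeas : ∀ k ∈ Finset.univ, AEStronglyMeasurable (c k • g k)
        (volume.restrict (Set.Ioi (0:ℝ))) := fun k _ =>
      ((hgm k).const_smul (c k)).aestronglyMeasurable
    have hone : (1:ℝ≥0∞) ≤ ENNReal.ofReal p := by
      rw [← ENNReal.ofReal_one]
      exact ENNReal.ofReal_le_ofReal hp
    have hbump : ∀ k : Fin n, eLpNorm (g k) (ENNReal.ofReal p)
        (volume.restrict (Set.Ioi (0:ℝ))) ≤ ENNReal.ofReal K := by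
      intro k
      rw [eLpNorm_eq_lintegral_rpow_enorm_toReal (by simp [hp0]) (by simp),
        ENNReal.toReal_ofReal hp0.le]
      have hle : ∫⁻ x in Set.Ioi (0:ℝ), (‖g k x‖₊ : ℝ≥0∞) ^ p ≤
          ENNReal.ofReal (3 * (h ^ (1 - α * p) / (1 - α * p))) :=
        le_trans (setLIntegral_le_lintegral _ _) (my_bump α p h (a k) hα0 hα1 hh hp hap)
      calc (∫⁻ x in Set.Ioi (0:ℝ), (‖g k x‖₊ : ℝ≥0∞) ^ p) ^ (1/p)
          ≤ ENNReal.ofReal (3 * (h ^ (1 - α * p) / (1 - α * p))) ^ (1/p) :=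
            ENNReal.rpow_le_rpow hle (by positivity)
        _ ≤ ENNReal.ofReal K := by
            rw [ENNReal.ofReal_rpow_of_nonneg (by positivity) (by positivity)]
            apply ENNReal.ofReal_le_ofReal
            have hcalc : (3 * (h ^ (1 - α * p) / (1 - α * p))) ^ (1/p) =
                3 ^ (1/p) * (h ^ (1/p - α) * (1 - α * p) ^ (-(1/p))) := by
              rw [div_eq_mul_inv, ← mul_assoc, Real.mul_rpow (by positivity) (by positivity),
                Real.mul_rpow (by norm_num) (by positivity),
                ← Real.rpow_mul hh.le, ← Real.rpow_neg_one (1 - α * p),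
                ← Real.rpow_mul h1q.le, mul_assoc]
              rw [show (1 - α * p) * (1/p) = 1/p - α by field_simp,
                show (-1:ℝ) * (1/p) = -(1/p) by ring]
            rw [hcalc, hK]
            have h3 : (3:ℝ) ^ (1/p) ≤ 3 := by
              calc (3:ℝ) ^ (1/p) ≤ 3 ^ (1:ℝ) :=
                  Real.rpow_le_rpow_of_exponent_le (by norm_num)
                    (by rw [div_le_one hp0]; linarith)
                _ = 3 := Real.rpow_one 3
            calc 3 ^ (1/p) * (h ^ (1/p - α) * (1 - α * p) ^ (-(1/p)))
                ≤ 3 * (h ^ (1/p - α) * (1 - α * p) ^ (-(1/p))) :=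
                  mul_le_mul_of_nonneg_right h3 (by positivity)
              _ = 3 * h ^ (1/p - α) * (1 - α * p) ^ (-(1/p)) := by ring
    calc eLpNorm Φ (ENNReal.ofReal p) (volume.restrict (Set.Ioi (0:ℝ)))
        ≤ ∑ k, eLpNorm (c k • g k) (ENNReal.ofReal p) (volume.restrict (Set.Ioi (0:ℝ))) := by
          rw [hΦsum]
          exact eLpNorm_sum_le hmeas hone
      _ ≤ ∑ k, ENNReal.ofReal (|c k| * K) := by
          apply Finset.sum_le_sum
          intro k _
          rw [eLpNorm_const_smul, ENNReal.ofReal_mul (abs_nonneg _),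
            ← Real.enorm_eq_ofReal_abs]
          exact mul_le_mul_right (hbump k) _
      _ = ENNReal.ofReal (3 * h ^ (1/p - α) * (1 - α * p) ^ (-(1/p)) * ∑ k, |c k|) := by
          rw [← ENNReal.ofReal_sum_of_nonneg (fun k _ => mul_nonneg (abs_nonneg _) hK0)]
          congr 1
          rw [← Finset.sum_mul, hK]
          ring
  · -- the identity with the `L^1` norm
    rw [hf1, ← ENNReal.ofReal_mul (by positivity)]
    congr 1
    have hstep : h ^ (1/p - α - 1) * h = h ^ (1/p - α) := by
      rw [← Real.rpow_add_one hh.ne', show (1/p - α - 1) + 1 = 1/p - α by ring]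
    rw [hK, ← hstep]
    ring
end

section
/- Let α ∈ (0,1), h > 0, and let f(x) = Σ_{k=1}^n c_k 1_{A_k}(x) be a very simple function with step h (pairwise disjoint intervals A_k = (a_k, a_k + h)). Let ζ : (1, 1/α) → (0, ∞) be bounded away from zero, set ψ_α(p) = (1 − α p)^{−1/p} and θ(p) = ψ_α(p) · ζ(p), and let Φ = Γ(1−α) · D^α[f] be given explicitly by Φ(x) = Σ_{k=1}^n c_k [ 1_{(a_k,∞)}(x)(x − a_k)^{−α} − 1_{(a_k+h,∞)}(x)(x − a_k − h)^{−α} ]. Then sup_{p ∈ (1, 1/α)} [ ‖Φ‖_{L^p(0,∞)} / θ(p) ] ≤ 3 · h^{−α − 1} · ( sup_{p ∈ (1, 1/α)} [ h^{1/p} / ζ(p) ] ) · ‖f‖_{L^1(0,∞)}. -/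
open MeasureTheory Real Set ENNReal

/-- Shift invariance of the Lebesgue lintegral. -/
lemma lint_shift_s11 (G : ℝ → ℝ≥0∞) (d : ℝ) :
    ∫⁻ x : ℝ, G (x - d) = ∫⁻ x : ℝ, G x := by
  simpa [sub_eq_add_neg] using lintegral_add_right_eq_self G (-d)

/-- Rewriting the `(b^(1-αp)/(1-αp))^(1/p)` value. -/
lemma near_val (α p b : ℝ) (hb : 0 < b) (hp0 : 0 < p) (h1ap : 0 < 1 - α * p) :
    (ENNReal.ofReal (b ^ (1 - α * p) / (1 - α * p))) ^ (1 / p)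
      = ENNReal.ofReal (b ^ (1 / p - α) * (1 - α * p) ^ (-(1 / p))) := by
  rw [ENNReal.ofReal_rpow_of_nonneg (by positivity) (by positivity)]
  congr 1
  rw [Real.div_rpow (by positivity) h1ap.le, ← Real.rpow_mul hb.le,
    Real.rpow_neg h1ap.le, div_eq_mul_inv,
    show (1 - α * p) * (1 / p) = 1 / p - α by field_simp]

/-- `L^p` norm bound for the near-field piece. -/
lemma piece_near (α p b d : ℝ) (hα : 0 < α) (hb : 0 < b) (hp : 1 ≤ p) (hap : α * p < 1) :
    eLpNorm (Set.indicator (Set.Ioc d (d + b)) (fun x => (x - d) ^ (-α)))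
        (ENNReal.ofReal p) volume
      ≤ ENNReal.ofReal (b ^ (1 / p - α) * (1 - α * p) ^ (-(1 / p))) := by
  have hp0 : 0 < p := lt_of_lt_of_le one_pos hp
  have h1ap : 0 < 1 - α * p := by linarith
  have hP0 : ENNReal.ofReal p ≠ 0 := by
    simp only [Ne, ENNReal.ofReal_eq_zero, not_le]; exact hp0
  rw [eLpNorm_eq_lintegral_rpow_enorm_toReal hP0 ofReal_ne_top, ENNReal.toReal_ofReal hp0.le]
  simp only [enorm_eq_nnnorm]
  have key : (∫⁻ x, ((‖(Set.indicator (Set.Ioc d (d + b)) (fun x => (x - d) ^ (-α))) x‖₊ : ℝ≥0∞)) ^ p)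
      = ∫⁻ t in Set.Ioc 0 b, ENNReal.ofReal (t ^ (-(α * p))) := by
    have e1 : (fun x => ((‖(Set.indicator (Set.Ioc d (d + b)) (fun x => (x - d) ^ (-α))) x‖₊ : ℝ≥0∞)) ^ p)
        = fun x => (Set.indicator (Set.Ioc 0 b) (fun t => ENNReal.ofReal (t ^ (-(α * p))))) (x - d) := by
      funext x
      by_cases hx : x ∈ Set.Ioc d (d + b)
      · have hx' : x - d ∈ Set.Ioc 0 b := ⟨by linarith [hx.1], by linarith [hx.2]⟩
        have hpos : (0:ℝ) < x - d := by linarith [hx.1]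
        rw [Set.indicator_of_mem hx, Set.indicator_of_mem hx',
          ← enorm_eq_nnnorm, Real.enorm_eq_ofReal (Real.rpow_nonneg hpos.le _),
          ENNReal.ofReal_rpow_of_nonneg (Real.rpow_nonneg hpos.le _) hp0.le,
          ← Real.rpow_mul hpos.le]
        congr 2
        ring
      · have hx' : x - d ∉ Set.Ioc 0 b := by
          intro hmem
          exact hx ⟨by linarith [hmem.1], by linarith [hmem.2]⟩
        rw [Set.indicator_of_notMem hx, Set.indicator_of_notMem hx']
        simp [ENNReal.zero_rpow_of_pos hp0]
    rw [e1, lint_shift_s11, lintegral_indicator measurableSet_Ioc]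
  rw [key]
  have int1 : IntegrableOn (fun t : ℝ => t ^ (-(α * p))) (Set.Ioc 0 b) :=
    (intervalIntegrable_iff_integrableOn_Ioc_of_le hb.le).mp
      (intervalIntegral.intervalIntegrable_rpow' (by linarith))
  have nn : 0 ≤ᵐ[volume.restrict (Set.Ioc 0 b)] fun t : ℝ => t ^ (-(α * p)) := by
    filter_upwards [ae_restrict_mem measurableSet_Ioc] with t ht
    exact Real.rpow_nonneg ht.1.le _
  rw [← ofReal_integral_eq_lintegral_ofReal int1 nn]
  have hval : (∫ t in Set.Ioc 0 b, t ^ (-(α * p))) = b ^ (1 - α * p) / (1 - α * p) := by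
    rw [← intervalIntegral.integral_of_le hb.le, integral_rpow (Or.inl (by linarith)),
      Real.zero_rpow (by linarith : -(α * p) + 1 ≠ 0), sub_zero,
      show -(α * p) + 1 = 1 - α * p by ring]
  rw [hval, near_val α p b hb hp0 h1ap]

/-- MVT bound: `s^(-α) - (s+b)^(-α) ≤ α b s^(-α-1)`. -/
lemma mvt_bound (α s b : ℝ) (hα : 0 < α) (hs : 0 < s) (hb : 0 < b) :
    s ^ (-α) - (s + b) ^ (-α) ≤ α * b * s ^ (-α - 1) := by
  obtain ⟨t, ht, hslope⟩ := exists_hasDerivAt_eq_slope (fun x : ℝ => x ^ (-α))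
      (fun x : ℝ => (-α) * x ^ (-α - 1)) (by linarith : s < s + b)
      (fun x hx => (Real.continuousAt_rpow_const x (-α)
        (Or.inl (lt_of_lt_of_le hs hx.1).ne')).continuousWithinAt)
      (fun x hx => Real.hasDerivAt_rpow_const (Or.inl (lt_trans hs hx.1).ne'))
  have hne : (s + b) - s ≠ 0 := by simp; linarith
  rw [eq_div_iff hne] at hslope
  have hsb : (s + b) - s = b := by ring
  rw [hsb] at hslope
  have heq : s ^ (-α) - (s + b) ^ (-α) = α * b * t ^ (-α - 1) := by
    linear_combination hslope
  rw [heq]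
  have htle : t ^ (-α - 1) ≤ s ^ (-α - 1) :=
    Real.rpow_le_rpow_of_nonpos hs ht.1.le (by linarith)
  exact mul_le_mul_of_nonneg_left htle (by positivity)

/-- `L^p` norm bound for the far-field piece. -/
lemma piece_tail (α p b d : ℝ) (hα : 0 < α) (hα1 : α < 1) (hb : 0 < b) (hp : 1 ≤ p)
    (hap : α * p < 1) :
    eLpNorm (Set.indicator (Set.Ioi (d + b)) (fun x => α * b * (x - d) ^ (-α - 1)))
        (ENNReal.ofReal p) volume
      ≤ ENNReal.ofReal (b ^ (1 / p - α) * (1 - α * p) ^ (-(1 / p))) := by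
  have hp0 : 0 < p := lt_of_lt_of_le one_pos hp
  have h1ap : 0 < 1 - α * p := by linarith
  have hr : (-α - 1) * p < -1 := by nlinarith
  have hP0 : ENNReal.ofReal p ≠ 0 := by
    simp only [Ne, ENNReal.ofReal_eq_zero, not_le]; exact hp0
  rw [eLpNorm_eq_lintegral_rpow_enorm_toReal hP0 ofReal_ne_top, ENNReal.toReal_ofReal hp0.le]
  simp only [enorm_eq_nnnorm]
  have key : (∫⁻ x, ((‖(Set.indicator (Set.Ioi (d + b)) (fun x => α * b * (x - d) ^ (-α - 1))) x‖₊ : ℝ≥0∞)) ^ p)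
      = ∫⁻ t in Set.Ioi b, ENNReal.ofReal ((α * b) ^ p * t ^ ((-α - 1) * p)) := by
    have e1 : (fun x => ((‖(Set.indicator (Set.Ioi (d + b)) (fun x => α * b * (x - d) ^ (-α - 1))) x‖₊ : ℝ≥0∞)) ^ p)
        = fun x => (Set.indicator (Set.Ioi b)
            (fun t => ENNReal.ofReal ((α * b) ^ p * t ^ ((-α - 1) * p)))) (x - d) := by
      funext x
      by_cases hx : x ∈ Set.Ioi (d + b)
      · have hx' : x - d ∈ Set.Ioi b := by
          simp only [Set.mem_Ioi] at hx ⊢; linarith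
        have hpos : (0:ℝ) < x - d := by
          simp only [Set.mem_Ioi] at hx; linarith
        have hnn : 0 ≤ α * b * (x - d) ^ (-α - 1) := by positivity
        rw [Set.indicator_of_mem hx, Set.indicator_of_mem hx',
          ← enorm_eq_nnnorm, Real.enorm_eq_ofReal hnn,
          ENNReal.ofReal_rpow_of_nonneg hnn hp0.le,
          Real.mul_rpow (by positivity) (Real.rpow_nonneg hpos.le _),
          ← Real.rpow_mul hpos.le]
      · have hx' : x - d ∉ Set.Ioi b := by
          simp only [Set.mem_Ioi] at hx ⊢; intro hmem; exact absurd (by linarith) hx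
        rw [Set.indicator_of_notMem hx, Set.indicator_of_notMem hx']
        simp [ENNReal.zero_rpow_of_pos hp0]
    rw [e1, lint_shift_s11, lintegral_indicator measurableSet_Ioi]
  rw [key]
  have int0 : IntegrableOn (fun t : ℝ => t ^ ((-α - 1) * p)) (Set.Ioi b) :=
    integrableOn_Ioi_rpow_of_lt hr hb
  have int1 : IntegrableOn (fun t : ℝ => (α * b) ^ p * t ^ ((-α - 1) * p)) (Set.Ioi b) :=
    int0.const_mul _
  have nn : 0 ≤ᵐ[volume.restrict (Set.Ioi b)]
      fun t : ℝ => (α * b) ^ p * t ^ ((-α - 1) * p) := by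
    filter_upwards [ae_restrict_mem measurableSet_Ioi] with t ht
    have : (0:ℝ) < t := lt_trans hb ht
    positivity
  rw [← ofReal_integral_eq_lintegral_ofReal int1 nn]
  have hval : (∫ t in Set.Ioi b, (α * b) ^ p * t ^ ((-α - 1) * p))
      = (α * b) ^ p * (-b ^ ((-α - 1) * p + 1) / ((-α - 1) * p + 1)) := by
    rw [MeasureTheory.integral_const_mul, integral_Ioi_rpow_of_lt hr hb]
  rw [hval]
  -- compare with the near-field value and conclude
  have hValle : (α * b) ^ p * (-b ^ ((-α - 1) * p + 1) / ((-α - 1) * p + 1))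
      ≤ b ^ (1 - α * p) / (1 - α * p) := by
    have hD : 0 < (α + 1) * p - 1 := by nlinarith
    have hexp : -b ^ ((-α - 1) * p + 1) / ((-α - 1) * p + 1)
        = b ^ (1 - (α + 1) * p) / ((α + 1) * p - 1) := by
      rw [show (-α - 1) * p + 1 = -((α + 1) * p - 1) by ring]
      rw [neg_div, div_neg, neg_neg]
      congr 2
      ring
    rw [hexp, Real.mul_rpow hα.le hb.le]
    have hbb : b ^ p * (b ^ (1 - (α + 1) * p) / ((α + 1) * p - 1))
        = b ^ (1 - α * p) / ((α + 1) * p - 1) := by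
      rw [mul_div_assoc', ← Real.rpow_add hb]
      congr 2
      ring
    rw [mul_assoc, hbb, ← mul_div_assoc]
    have hαp : α ^ p ≤ α := by
      have := Real.rpow_le_rpow_of_exponent_ge hα hα1.le hp
      rwa [Real.rpow_one] at this
    rw [div_le_div_iff₀ hD h1ap]
    have hbnn : 0 ≤ b ^ (1 - α * p) := Real.rpow_nonneg hb.le _
    have h1 : α ^ p * b ^ (1 - α * p) * (1 - α * p) ≤ α * b ^ (1 - α * p) * (1 - α * p) := by
      have := mul_le_mul_of_nonneg_right hαp (mul_nonneg hbnn h1ap.le)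
      calc α ^ p * b ^ (1 - α * p) * (1 - α * p)
          = α ^ p * (b ^ (1 - α * p) * (1 - α * p)) := by ring
        _ ≤ α * (b ^ (1 - α * p) * (1 - α * p)) := this
        _ = α * b ^ (1 - α * p) * (1 - α * p) := by ring
    refine h1.trans ?_
    have h2 : α * (1 - α * p) ≤ (α + 1) * p - 1 := by nlinarith
    calc α * b ^ (1 - α * p) * (1 - α * p) = b ^ (1 - α * p) * (α * (1 - α * p)) := by ring
      _ ≤ b ^ (1 - α * p) * ((α + 1) * p - 1) := by
          exact mul_le_mul_of_nonneg_left h2 hbnn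
  calc (ENNReal.ofReal ((α * b) ^ p * (-b ^ ((-α - 1) * p + 1) / ((-α - 1) * p + 1)))) ^ (1 / p)
      ≤ (ENNReal.ofReal (b ^ (1 - α * p) / (1 - α * p))) ^ (1 / p) :=
        ENNReal.rpow_le_rpow (ENNReal.ofReal_le_ofReal hValle) (by positivity)
    _ = ENNReal.ofReal (b ^ (1 / p - α) * (1 - α * p) ^ (-(1 / p))) :=
        near_val α p b hb hp0 h1ap

/-- Pointwise domination of one difference kernel by the three pieces. -/
lemma dominate (α b A : ℝ) (hα : 0 < α) (hb : 0 < b) (x : ℝ) :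
    |Set.indicator (Set.Ioi A) (fun y => (y - A) ^ (-α)) x -
      Set.indicator (Set.Ioi (A + b)) (fun y => (y - (A + b)) ^ (-α)) x|
    ≤ Set.indicator (Set.Ioc A (A + b)) (fun y => (y - A) ^ (-α)) x
      + Set.indicator (Set.Ioc (A + b) ((A + b) + b)) (fun y => (y - (A + b)) ^ (-α)) x
      + Set.indicator (Set.Ioi ((A + b) + b)) (fun y => α * b * (y - (A + b)) ^ (-α - 1)) x := by
  rcases le_or_gt x A with h1 | h1
  · rw [Set.indicator_of_notMem (by simp only [Set.mem_Ioi, not_lt]; linarith),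
      Set.indicator_of_notMem (by simp only [Set.mem_Ioi, not_lt]; linarith),
      Set.indicator_of_notMem (fun hm => absurd hm.1 (by simp only [not_lt]; linarith)),
      Set.indicator_of_notMem (fun hm => absurd hm.1 (by simp only [not_lt]; linarith)),
      Set.indicator_of_notMem (by simp only [Set.mem_Ioi, not_lt]; linarith)]
    simp
  · rcases le_or_gt x (A + b) with h2 | h2
    · rw [Set.indicator_of_mem (Set.mem_Ioi.mpr h1),
        Set.indicator_of_notMem (by simp only [Set.mem_Ioi, not_lt]; linarith),
        Set.indicator_of_mem (Set.mem_Ioc.mpr ⟨h1, h2⟩),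
        Set.indicator_of_notMem (fun hm => absurd hm.1 (by simp only [not_lt]; linarith)),
        Set.indicator_of_notMem (by simp only [Set.mem_Ioi, not_lt]; linarith)]
      rw [sub_zero, add_zero, add_zero, abs_of_nonneg (Real.rpow_nonneg (by linarith) _)]
    · have hu0 : (0:ℝ) < x - A := by linarith
      have hv0 : (0:ℝ) < x - (A + b) := by linarith
      have hle : (x - A) ^ (-α) ≤ (x - (A + b)) ^ (-α) :=
        Real.rpow_le_rpow_of_nonpos hv0 (by linarith) (by linarith)
      have hunn : (0:ℝ) ≤ (x - A) ^ (-α) := Real.rpow_nonneg hu0.le _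
      rcases le_or_gt x ((A + b) + b) with h3 | h3
      · rw [Set.indicator_of_mem (Set.mem_Ioi.mpr h1),
          Set.indicator_of_mem (Set.mem_Ioi.mpr h2),
          Set.indicator_of_notMem (fun hm => absurd hm.2 (by simp only [not_le]; linarith)),
          Set.indicator_of_mem (Set.mem_Ioc.mpr ⟨h2, h3⟩),
          Set.indicator_of_notMem (by simp only [Set.mem_Ioi, not_lt]; linarith)]
        rw [zero_add, add_zero, abs_le]
        constructor
        · have : (0:ℝ) ≤ (x - (A + b)) ^ (-α) := Real.rpow_nonneg hv0.le _
          nlinarith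
        · nlinarith [Real.rpow_nonneg hv0.le (-α)]
      · rw [Set.indicator_of_mem (Set.mem_Ioi.mpr h1),
          Set.indicator_of_mem (Set.mem_Ioi.mpr h2),
          Set.indicator_of_notMem (fun hm => absurd hm.2 (by simp only [not_le]; linarith)),
          Set.indicator_of_notMem (fun hm => absurd hm.2 (by simp only [not_le]; linarith)),
          Set.indicator_of_mem (Set.mem_Ioi.mpr h3)]
        have hmvt := mvt_bound α (x - (A + b)) b hα (by linarith) hb
        rw [show x - (A + b) + b = x - A by ring] at hmvt
        rw [zero_add, zero_add, abs_le]
        constructor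
        · nlinarith [Real.rpow_nonneg hv0.le (-α - 1)]
        · nlinarith [Real.rpow_nonneg hv0.le (-α - 1), Real.rpow_nonneg hv0.le (-α)]

/-- `L^p` bound for one difference kernel. -/
lemma gk_bound (α p b A : ℝ) (hα : 0 < α) (hα1 : α < 1) (hb : 0 < b) (hp : 1 ≤ p)
    (hap : α * p < 1) :
    eLpNorm (fun x => Set.indicator (Set.Ioi A) (fun y => (y - A) ^ (-α)) x -
        Set.indicator (Set.Ioi (A + b)) (fun y => (y - (A + b)) ^ (-α)) x)
      (ENNReal.ofReal p) volume
    ≤ ENNReal.ofReal (3 * (b ^ (1 / p - α) * (1 - α * p) ^ (-(1 / p)))) := by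
  have hp0 : 0 < p := lt_of_lt_of_le one_pos hp
  have h1ap : 0 < 1 - α * p := by linarith
  have hP1 : (1 : ℝ≥0∞) ≤ ENNReal.ofReal p := ENNReal.one_le_ofReal.mpr hp
  set w1 : ℝ → ℝ := Set.indicator (Set.Ioc A (A + b)) (fun y => (y - A) ^ (-α)) with hw1
  set w2 : ℝ → ℝ := Set.indicator (Set.Ioc (A + b) ((A + b) + b))
    (fun y => (y - (A + b)) ^ (-α)) with hw2
  set w3 : ℝ → ℝ := Set.indicator (Set.Ioi ((A + b) + b))
    (fun y => α * b * (y - (A + b)) ^ (-α - 1)) with hw3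
  have hm1 : AEStronglyMeasurable w1 volume :=
    ((Measurable.indicator (by fun_prop) measurableSet_Ioc)).aestronglyMeasurable
  have hm2 : AEStronglyMeasurable w2 volume :=
    ((Measurable.indicator (by fun_prop) measurableSet_Ioc)).aestronglyMeasurable
  have hm3 : AEStronglyMeasurable w3 volume :=
    ((Measurable.indicator (by fun_prop) measurableSet_Ioi)).aestronglyMeasurable
  have hdom : eLpNorm (fun x => Set.indicator (Set.Ioi A) (fun y => (y - A) ^ (-α)) x -
        Set.indicator (Set.Ioi (A + b)) (fun y => (y - (A + b)) ^ (-α)) x)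
      (ENNReal.ofReal p) volume ≤ eLpNorm (fun x => w1 x + w2 x + w3 x)
      (ENNReal.ofReal p) volume :=
    eLpNorm_mono_real (fun x => by
      simpa [Real.norm_eq_abs] using dominate α b A hα hb x)
  refine hdom.trans ?_
  have htri : eLpNorm (fun x => w1 x + w2 x + w3 x) (ENNReal.ofReal p) volume
      ≤ eLpNorm w1 (ENNReal.ofReal p) volume + eLpNorm w2 (ENNReal.ofReal p) volume
        + eLpNorm w3 (ENNReal.ofReal p) volume := by
    have h12 : eLpNorm (fun x => w1 x + w2 x) (ENNReal.ofReal p) volume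
        ≤ eLpNorm w1 (ENNReal.ofReal p) volume + eLpNorm w2 (ENNReal.ofReal p) volume :=
      eLpNorm_add_le hm1 hm2 hP1
    calc eLpNorm (fun x => w1 x + w2 x + w3 x) (ENNReal.ofReal p) volume
        ≤ eLpNorm (fun x => w1 x + w2 x) (ENNReal.ofReal p) volume
          + eLpNorm w3 (ENNReal.ofReal p) volume := eLpNorm_add_le (hm1.add hm2) hm3 hP1
      _ ≤ _ := add_le_add_left h12 _
  refine htri.trans ?_
  have hb1 := piece_near α p b A hα hb hp hap
  have hb2 := piece_near α p b (A + b) hα hb hp hap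
  have hb3 := piece_tail α p b (A + b) hα hα1 hb hp hap
  have hMnn : 0 ≤ b ^ (1 / p - α) * (1 - α * p) ^ (-(1 / p)) := by positivity
  calc eLpNorm w1 (ENNReal.ofReal p) volume + eLpNorm w2 (ENNReal.ofReal p) volume
        + eLpNorm w3 (ENNReal.ofReal p) volume
      ≤ ENNReal.ofReal (b ^ (1 / p - α) * (1 - α * p) ^ (-(1 / p)))
        + ENNReal.ofReal (b ^ (1 / p - α) * (1 - α * p) ^ (-(1 / p)))
        + ENNReal.ofReal (b ^ (1 / p - α) * (1 - α * p) ^ (-(1 / p))) :=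
        add_le_add (add_le_add hb1 hb2) hb3
    _ = ENNReal.ofReal (3 * (b ^ (1 / p - α) * (1 - α * p) ^ (-(1 / p)))) := by
        rw [← ENNReal.ofReal_add hMnn hMnn, ← ENNReal.ofReal_add (by linarith) hMnn]
        congr 1
        ring

/-- Grand Lebesgue norm estimate for the fractional derivative of a very simple
(stepwise) function `f = Σ c_k 1_{(a_k, a_k+h)}` with pairwise disjoint intervals of common
length `h`: with `θ(p) = (1-αp)^{-1/p} ζ(p)`,
`‖Γ(1-α) D^α f‖Gθ ≤ 3 h^{-α-1} φ(Gζ, h) ‖f‖_1`. -/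
theorem stmt_11 (α h : ℝ) (hα : α ∈ Set.Ioo (0 : ℝ) 1) (hh : 0 < h)
    (n : ℕ) (hn : 1 ≤ n) (a c : Fin n → ℝ) (ha : ∀ k, 0 < a k)
    (hdisj : Pairwise fun i j =>
      Disjoint (Set.Ioo (a i) (a i + h)) (Set.Ioo (a j) (a j + h)))
    (ζ : ℝ → ℝ) (hζpos : ∀ p ∈ Set.Ioo (1 : ℝ) (1 / α), 0 < ζ p)
    (hζ : ∃ ε : ℝ, 0 < ε ∧ ∀ p ∈ Set.Ioo (1 : ℝ) (1 / α), ε ≤ ζ p) :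
    let f : ℝ → ℝ := fun x =>
      ∑ k, c k * Set.indicator (Set.Ioo (a k) (a k + h)) (fun _ => (1 : ℝ)) x
    let Φ : ℝ → ℝ := fun x =>
      ∑ k, c k * (Set.indicator (Set.Ioi (a k)) (fun y => (y - a k) ^ (-α)) x -
        Set.indicator (Set.Ioi (a k + h)) (fun y => (y - (a k + h)) ^ (-α)) x)
    (⨆ p ∈ Set.Ioo (1 : ℝ) (1 / α),
        eLpNorm Φ (ENNReal.ofReal p) (volume.restrict (Set.Ioi (0 : ℝ))) /
          ENNReal.ofReal ((1 - α * p) ^ (-(1 / p)) * ζ p)) ≤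
      ENNReal.ofReal (3 * h ^ (-α - 1)) *
        (⨆ p ∈ Set.Ioo (1 : ℝ) (1 / α), ENNReal.ofReal (h ^ (1 / p) / ζ p)) *
          eLpNorm f 1 (volume.restrict (Set.Ioi (0 : ℝ))) := by
  intro f Φ
  obtain ⟨hα0, hα1⟩ := hα
  have hf : f = fun x =>
      ∑ k, c k * Set.indicator (Set.Ioo (a k) (a k + h)) (fun _ => (1 : ℝ)) x := rfl
  have hΦdef : Φ = fun x =>
      ∑ k, c k * (Set.indicator (Set.Ioi (a k)) (fun y => (y - a k) ^ (-α)) x -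
        Set.indicator (Set.Ioi (a k + h)) (fun y => (y - (a k + h)) ^ (-α)) x) := rfl
  -- lower bound for the `L^1` norm of `f`
  have hf1 : ENNReal.ofReal ((∑ k, |c k|) * h)
      ≤ eLpNorm f 1 (volume.restrict (Set.Ioi (0 : ℝ))) := by
    rw [eLpNorm_one_eq_lintegral_enorm]; simp only [enorm_eq_nnnorm]
    have hUsub : (⋃ k, Set.Ioo (a k) (a k + h)) ⊆ Set.Ioi (0:ℝ) := by
      intro x hx
      obtain ⟨k, hk⟩ := Set.mem_iUnion.mp hx
      exact Set.mem_Ioi.mpr (lt_trans (ha k) hk.1)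
    have hstep : ∫⁻ x in ⋃ k, Set.Ioo (a k) (a k + h), (‖f x‖₊ : ℝ≥0∞)
        ≤ ∫⁻ x in Set.Ioi (0:ℝ), (‖f x‖₊ : ℝ≥0∞) :=
      lintegral_mono' (Measure.restrict_mono hUsub le_rfl) le_rfl
    refine le_trans ?_ hstep
    rw [lintegral_iUnion (fun k => measurableSet_Ioo) hdisj, tsum_fintype]
    have hterm : ∀ k, (∫⁻ x in Set.Ioo (a k) (a k + h), (‖f x‖₊ : ℝ≥0∞))
        = ENNReal.ofReal (|c k| * h) := by
      intro k
      have hfx : ∀ x ∈ Set.Ioo (a k) (a k + h), (‖f x‖₊ : ℝ≥0∞) = ENNReal.ofReal |c k| := by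
        intro x hx
        have hfv : f x = c k := by
          show (∑ j, c j * Set.indicator (Set.Ioo (a j) (a j + h)) (fun _ => (1:ℝ)) x) = c k
          rw [Finset.sum_eq_single k]
          · rw [Set.indicator_of_mem hx]; ring
          · intro j _ hj
            have hxj : x ∉ Set.Ioo (a j) (a j + h) := by
              intro hxj
              exact (Set.disjoint_left.mp (hdisj hj) hxj) hx
            rw [Set.indicator_of_notMem hxj]; ring
          · intro hk; exact absurd (Finset.mem_univ k) hk
        rw [hfv, ← nnnorm_abs]
        exact Real.enorm_eq_ofReal (abs_nonneg _)
      rw [setLIntegral_congr_fun measurableSet_Ioo hfx,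
        setLIntegral_const, Real.volume_Ioo, show a k + h - a k = h by ring,
        ← ENNReal.ofReal_mul (abs_nonneg _)]
    rw [Finset.sum_congr rfl (fun k _ => hterm k), ← ENNReal.ofReal_sum_of_nonneg
      (fun k _ => mul_nonneg (abs_nonneg _) hh.le), ← Finset.sum_mul]
  refine iSup₂_le fun p hp => ?_
  obtain ⟨hp1, hp2⟩ := hp
  have hp0 : 0 < p := by linarith
  have hap : α * p < 1 := by
    have := (lt_div_iff₀ hα0).mp hp2
    linarith [this]
  have h1ap : 0 < 1 - α * p := by linarith
  have hζp : 0 < ζ p := hζpos p ⟨hp1, hp2⟩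
  have hSnn : 0 ≤ ∑ k, |c k| := Finset.sum_nonneg fun k _ => abs_nonneg _
  -- norm bound for Φ
  have hΦ : eLpNorm Φ (ENNReal.ofReal p) (volume.restrict (Set.Ioi (0 : ℝ)))
      ≤ ENNReal.ofReal ((∑ k, |c k|) * (3 * (h ^ (1 / p - α) * (1 - α * p) ^ (-(1 / p))))) := by
    refine le_trans (eLpNorm_mono_measure _ Measure.restrict_le_self) ?_
    have hΦsum : Φ = ∑ k : Fin n, fun x =>
        (c k) • (Set.indicator (Set.Ioi (a k)) (fun y => (y - a k) ^ (-α)) x -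
          Set.indicator (Set.Ioi (a k + h)) (fun y => (y - (a k + h)) ^ (-α)) x) := by
      funext x
      rw [hΦdef]
      simp [Finset.sum_apply, smul_eq_mul]
    rw [hΦsum]
    have hgm : ∀ k : Fin n, AEStronglyMeasurable
        (fun x => Set.indicator (Set.Ioi (a k)) (fun y => (y - a k) ^ (-α)) x -
          Set.indicator (Set.Ioi (a k + h)) (fun y => (y - (a k + h)) ^ (-α)) x) volume := by
      intro k
      exact (((Measurable.indicator (by fun_prop) measurableSet_Ioi)).sub
        ((Measurable.indicator (by fun_prop) measurableSet_Ioi))).aestronglyMeasurable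
    have hsum := eLpNorm_sum_le (f := fun k : Fin n => fun x =>
        (c k) • (Set.indicator (Set.Ioi (a k)) (fun y => (y - a k) ^ (-α)) x -
          Set.indicator (Set.Ioi (a k + h)) (fun y => (y - (a k + h)) ^ (-α)) x))
      (s := Finset.univ) (μ := volume) (p := ENNReal.ofReal p)
      (fun k _ => (hgm k).const_smul (c k)) (ENNReal.one_le_ofReal.mpr hp1.le)
    refine hsum.trans ?_
    have hterm : ∀ k : Fin n, eLpNorm (fun x =>
        (c k) • (Set.indicator (Set.Ioi (a k)) (fun y => (y - a k) ^ (-α)) x -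
          Set.indicator (Set.Ioi (a k + h)) (fun y => (y - (a k + h)) ^ (-α)) x))
        (ENNReal.ofReal p) volume
        ≤ ENNReal.ofReal |c k| * ENNReal.ofReal (3 * (h ^ (1 / p - α) * (1 - α * p) ^ (-(1 / p)))) := by
      intro k
      have hsmul : (fun x => (c k) • (Set.indicator (Set.Ioi (a k)) (fun y => (y - a k) ^ (-α)) x -
          Set.indicator (Set.Ioi (a k + h)) (fun y => (y - (a k + h)) ^ (-α)) x))
        = (c k) • (fun x => Set.indicator (Set.Ioi (a k)) (fun y => (y - a k) ^ (-α)) x -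
          Set.indicator (Set.Ioi (a k + h)) (fun y => (y - (a k + h)) ^ (-α)) x) := rfl
      rw [hsmul, eLpNorm_const_smul]
      have hck : (‖c k‖₊ : ℝ≥0∞) = ENNReal.ofReal |c k| := by
        rw [← nnnorm_abs]
        exact Real.enorm_eq_ofReal (abs_nonneg _)
      rw [enorm_eq_nnnorm, hck]
      exact mul_le_mul_right (gk_bound α p h (a k) hα0 hα1 hh hp1.le hap) _
    refine (Finset.sum_le_sum fun k _ => hterm k).trans ?_
    rw [← Finset.sum_mul, ← ENNReal.ofReal_sum_of_nonneg (fun k _ => abs_nonneg _),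
      ← ENNReal.ofReal_mul hSnn]
  -- assemble
  have hden0 : ENNReal.ofReal ((1 - α * p) ^ (-(1 / p)) * ζ p) ≠ 0 := by
    rw [Ne, ENNReal.ofReal_eq_zero, not_le]
    positivity
  rw [ENNReal.div_le_iff hden0 ofReal_ne_top]
  calc eLpNorm Φ (ENNReal.ofReal p) (volume.restrict (Set.Ioi (0 : ℝ)))
      ≤ ENNReal.ofReal ((∑ k, |c k|) * (3 * (h ^ (1 / p - α) * (1 - α * p) ^ (-(1 / p))))) := hΦ
    _ = ENNReal.ofReal (3 * h ^ (-α - 1)) * ENNReal.ofReal (h ^ (1 / p) / ζ p)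
        * ENNReal.ofReal ((∑ k, |c k|) * h)
        * ENNReal.ofReal ((1 - α * p) ^ (-(1 / p)) * ζ p) := by
        rw [← ENNReal.ofReal_mul (by positivity), ← ENNReal.ofReal_mul (by positivity),
          ← ENNReal.ofReal_mul (by positivity)]
        congr 1
        have hhh : h ^ (-α - 1) * h ^ (1 / p) * h = h ^ (1 / p - α) := by
          nth_rewrite 3 [← Real.rpow_one h]
          rw [← Real.rpow_add hh, ← Real.rpow_add hh]
          congr 1
          ring
        rw [← hhh]
        field_simp
    _ ≤ ENNReal.ofReal (3 * h ^ (-α - 1)) *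
        (⨆ p ∈ Set.Ioo (1 : ℝ) (1 / α), ENNReal.ofReal (h ^ (1 / p) / ζ p)) *
          eLpNorm f 1 (volume.restrict (Set.Ioi (0 : ℝ)))
        * ENNReal.ofReal ((1 - α * p) ^ (-(1 / p)) * ζ p) := by
        refine mul_le_mul_left ?_ _
        refine mul_le_mul' (mul_le_mul' le_rfl ?_) hf1
        exact le_iSup₂ (f := fun q (_ : q ∈ Set.Ioo (1 : ℝ) (1 / α)) =>
          ENNReal.ofReal (h ^ (1 / q) / ζ q)) p ⟨hp1, hp2⟩
end

section
/- Let α ∈ (0,1), 1 ≤ p < ∞, 0 < b ≤ ∞, and let f : ℝ → ℝ be a measurable function vanishing outside (0, b). Define the Marchaud fractional derivative Γ(1−α) · D^α[f](x) = x^{−α} f(x) + α ∫_0^x (f(x) − f(t)) · (x − t)^{−1−α} dt for x ∈ (0, b). Then Γ(1−α) · ‖D^α[f]‖_{L^p(0,b)} ≤ ‖ x ↦ x^{−α} f(x) ‖_{L^p(0,b)} + α ∫_0^b t^{−1−α} · ω_p(f, t) dt, where ω_p(f, δ) = sup_{|h| ≤ δ} ‖ f(· + h) − f(·) ‖_{L^p(ℝ)}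 is the L^p modulus of continuity (with f extended by zero outside (0,b)). In particular, ‖D^α[f]‖_{L^p(0,b)} ≤ (1/Γ(1−α)) · ‖f‖_{B^{(α)}_p}. -/
open MeasureTheory Real Set ENNReal

/-- The Marchaud fractional derivative
`D^α[f](x) = (1/Γ(1-α)) [x^{-α} f(x) + α ∫_0^x (f(x)-f(t))(x-t)^{-1-α} dt]`. -/
noncomputable def marchaud (α : ℝ) (f : ℝ → ℝ) (x : ℝ) : ℝ :=
  (1 / Real.Gamma (1 - α)) *
    (x ^ (-α) * f x + α * ∫ t in (0 : ℝ)..x, (f x - f t) * (x - t) ^ (-1 - α))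

/-- The `L^p` modulus of continuity `ω_p(f,δ) = sup_{|h| ≤ δ} ‖f(·+h) - f(·)‖_{L^p(ℝ)}`. -/
noncomputable def modulusLp (p : ℝ≥0∞) (f : ℝ → ℝ) (δ : ℝ) : ℝ≥0∞ :=
  ⨆ h ∈ Set.Icc (-δ) δ, eLpNorm (fun x => f (x + h) - f x) p volume

/-- The interval `(0,b)` for `b : ℝ≥0∞` (allowing `b = ∞`), as a subset of `ℝ`. -/
def intervalOf (b : ℝ≥0∞) : Set ℝ := {x : ℝ | 0 < x ∧ ENNReal.ofReal x < b}

/-- The modified Besov norm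
`‖f‖_{B^α_p} = ‖x^{-α} f(x)‖_{L^p(0,b)} + α ∫_0^b t^{-1-α} ω_p(f,t) dt`. -/
noncomputable def besovNorm (α p : ℝ) (b : ℝ≥0∞) (f : ℝ → ℝ) : ℝ≥0∞ :=
  eLpNorm (fun x => x ^ (-α) * f x) (ENNReal.ofReal p) (volume.restrict (intervalOf b)) +
    ENNReal.ofReal α *
      ∫⁻ t in intervalOf b, ENNReal.ofReal (t ^ (-1 - α)) * modulusLp (ENNReal.ofReal p) f t

theorem my_trunc_sup (a : ℝ≥0∞) : ⨆ n : ℕ, min a n = a := by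
  rcases eq_top_or_lt_top a with rfl | ha
  · have : ∀ n : ℕ, min (⊤ : ℝ≥0∞) n = n := fun n => min_eq_right le_top
    simp_rw [this, ENNReal.iSup_natCast]
  · obtain ⟨n, hn⟩ := ENNReal.exists_nat_gt ha.ne
    refine le_antisymm (iSup_le fun n => min_le_left _ _) ?_
    calc a = min a n := (min_eq_left hn.le).symm
    _ ≤ ⨆ n : ℕ, min a n := le_iSup (fun n : ℕ => min a ↑n) n

theorem minkowski_aux {X Y : Type*} [MeasurableSpace X] [MeasurableSpace Y]
    (μ : Measure X) (ν : Measure Y) [SFinite μ] [SFinite ν]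
    {p : ℝ} (hp : 1 < p) {F : X → Y → ℝ≥0∞} (hF : Measurable (Function.uncurry F))
    (hfin : (∫⁻ x, (∫⁻ y, F x y ∂ν) ^ p ∂μ) ≠ ⊤) :
    (∫⁻ x, (∫⁻ y, F x y ∂ν) ^ p ∂μ) ^ (1/p) ≤ ∫⁻ y, (∫⁻ x, (F x y) ^ p ∂μ) ^ (1/p) ∂ν := by
  have hp0 : (0:ℝ) < p := by linarith
  set G : X → ℝ≥0∞ := fun x => ∫⁻ y, F x y ∂ν with hGdef
  have hG : Measurable G := hF.lintegral_prod_right'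
  set I : ℝ≥0∞ := ∫⁻ x, G x ^ p ∂μ with hIdef
  rcases eq_or_ne I 0 with hI0 | hI0
  · rw [hI0, ENNReal.zero_rpow_of_pos (by positivity)]; exact zero_le
  have hq : Real.HolderConjugate (p/(p-1)) p := by
    exact (Real.HolderConjugate.conjExponent hp).symm
  set R : ℝ≥0∞ := ∫⁻ y, (∫⁻ x, (F x y) ^ p ∂μ) ^ (1/p) ∂ν with hRdef
  have hGp1 : Measurable fun x => G x ^ (p - 1) := hG.pow_const _
  have step1 : I = ∫⁻ y, ∫⁻ x, G x ^ (p-1) * F x y ∂μ ∂ν := by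
    have : ∀ x, G x ^ p = ∫⁻ y, G x ^ (p-1) * F x y ∂ν := by
      intro x
      rw [lintegral_const_mul _ (hF.of_uncurry_left)]
      calc G x ^ p = G x ^ ((p-1) + 1) := by rw [sub_add_cancel]
      _ = G x ^ (p-1) * G x ^ (1:ℝ) :=
          ENNReal.rpow_add_of_nonneg _ _ (by linarith) zero_le_one
      _ = G x ^ (p-1) * G x := by rw [ENNReal.rpow_one]
    rw [hIdef]
    simp_rw [this]
    exact lintegral_lintegral_swap ((hGp1.comp measurable_fst).mul hF).aemeasurable
  have step2 : ∀ y, ∫⁻ x, G x ^ (p-1) * F x y ∂μ ≤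
      I ^ (1/(p/(p-1))) * (∫⁻ x, F x y ^ p ∂μ) ^ (1/p) := by
    intro y
    have h := ENNReal.lintegral_mul_le_Lp_mul_Lq μ hq hGp1.aemeasurable
      (hF.of_uncurry_right (y := y)).aemeasurable
    have heq : ∫⁻ a, (G a ^ (p-1)) ^ (p/(p-1)) ∂μ = I := by
      rw [hIdef]
      refine lintegral_congr fun a => ?_
      rw [← ENNReal.rpow_mul]
      congr 1
      field_simp [show p - 1 ≠ 0 by linarith]
    calc ∫⁻ x, G x ^ (p-1) * F x y ∂μ
        = ∫⁻ a, ((fun x => G x ^ (p-1)) * fun x => F x y) a ∂μ := rfl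
    _ ≤ (∫⁻ a, (G a ^ (p-1)) ^ (p/(p-1)) ∂μ) ^ (1/(p/(p-1))) * (∫⁻ a, F a y ^ p ∂μ) ^ (1/p) := h
    _ = I ^ (1/(p/(p-1))) * (∫⁻ x, F x y ^ p ∂μ) ^ (1/p) := by rw [heq]
  have hcpos : (0:ℝ) < 1/(p/(p-1)) := one_div_pos.mpr (div_pos hp0 (by linarith))
  have hIc_ne_top : I ^ (1/(p/(p-1))) ≠ ⊤ :=
    ENNReal.rpow_ne_top_of_nonneg hcpos.le hfin
  have key : I ≤ I ^ (1/(p/(p-1))) * R := by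
    calc I = ∫⁻ y, ∫⁻ x, G x ^ (p-1) * F x y ∂μ ∂ν := step1
    _ ≤ ∫⁻ y, I ^ (1/(p/(p-1))) * (∫⁻ x, F x y ^ p ∂μ) ^ (1/p) ∂ν := lintegral_mono step2
    _ = I ^ (1/(p/(p-1))) * R := lintegral_const_mul' _ _ hIc_ne_top
  have hsplit : I = I ^ (1/(p/(p-1))) * I ^ (1/p) := by
    rw [← ENNReal.rpow_add_of_nonneg _ _ hcpos.le (by positivity)]
    rw [show 1/(p/(p-1)) + 1/p = 1 by field_simp; ring, ENNReal.rpow_one]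
  have key2 : I ^ (1/(p/(p-1))) * I ^ (1/p) ≤ I ^ (1/(p/(p-1))) * R :=
    hsplit.symm.trans_le key
  have hpos : (0:ℝ≥0∞) < I ^ (1/(p/(p-1))) :=
    ENNReal.rpow_pos (pos_iff_ne_zero.mpr hI0) hfin
  exact (ENNReal.mul_le_mul_iff_right hpos.ne' hIc_ne_top).mp key2

theorem minkowski_lintegral {X Y : Type*} [MeasurableSpace X] [MeasurableSpace Y]
    (μ : Measure X) (ν : Measure Y) [SigmaFinite μ] [SigmaFinite ν]
    {p : ℝ} (hp : 1 ≤ p) {F : X → Y → ℝ≥0∞} (hF : Measurable (Function.uncurry F)) :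
    (∫⁻ x, (∫⁻ y, F x y ∂ν) ^ p ∂μ) ^ (1/p) ≤ ∫⁻ y, (∫⁻ x, (F x y) ^ p ∂μ) ^ (1/p) ∂ν := by
  classical
  rcases eq_or_lt_of_le hp with hp1 | hp1
  · subst hp1
    simp_rw [ENNReal.rpow_one, one_div_one, ENNReal.rpow_one]
    exact (lintegral_lintegral_swap hF.aemeasurable).le
  have hp0 : (0:ℝ) < p := by linarith
  set Fn : ℕ → X → Y → ℝ≥0∞ := fun n x y =>
    ((spanningSets μ n) ×ˢ (spanningSets ν n)).indicator
      (fun z => min (F z.1 z.2) n) (x, y) with hFndef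
  have hFnm : ∀ n, Measurable (Function.uncurry (Fn n)) := by
    intro n
    exact Measurable.indicator (hF.min measurable_const)
      ((measurableSet_spanningSets μ n).prod (measurableSet_spanningSets ν n))
  have hFn_le : ∀ n x y, Fn n x y ≤ F x y := by
    intro n x y
    rw [hFndef]
    dsimp only
    rw [Set.indicator_apply]
    split
    · exact min_le_left _ _
    · exact zero_le
  have hmono : ∀ x y, Monotone fun n => Fn n x y := by
    intro x y m n hmn
    simp only [hFndef, Set.indicator_apply]
    split_ifs with h1 h2 h2
    · exact min_le_min le_rfl (Nat.cast_le.mpr hmn)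
    · exact absurd (Set.prod_mono (monotone_spanningSets μ hmn)
        (monotone_spanningSets ν hmn) h1) h2
    · exact zero_le
    · exact le_rfl
  have hsup : ∀ x y, ⨆ n, Fn n x y = F x y := by
    intro x y
    refine le_antisymm (iSup_le fun n => hFn_le n x y) ?_
    obtain ⟨m1, hm1⟩ : ∃ m, x ∈ spanningSets μ m := by
      have := iUnion_spanningSets μ
      exact Set.mem_iUnion.mp (this ▸ Set.mem_univ x)
    obtain ⟨m2, hm2⟩ : ∃ m, y ∈ spanningSets ν m := by
      have := iUnion_spanningSets ν
      exact Set.mem_iUnion.mp (this ▸ Set.mem_univ y)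
    conv_lhs => rw [← my_trunc_sup (F x y)]
    refine iSup_le fun n => ?_
    have hmem : (x, y) ∈ (spanningSets μ (max n (max m1 m2))) ×ˢ
        (spanningSets ν (max n (max m1 m2))) := by
      constructor
      · exact monotone_spanningSets μ (le_max_of_le_right (le_max_left _ _)) hm1
      · exact monotone_spanningSets ν (le_max_of_le_right (le_max_right _ _)) hm2
    calc min (F x y) n ≤ Fn (max n (max m1 m2)) x y := by
          rw [hFndef]; dsimp only; rw [Set.indicator_of_mem hmem]
          exact min_le_min le_rfl (Nat.cast_le.mpr (le_max_left _ _))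
    _ ≤ ⨆ n, Fn n x y := le_iSup (fun n => Fn n x y) _
  set Gn : ℕ → X → ℝ≥0∞ := fun n x => ∫⁻ y, Fn n x y ∂ν with hGndef
  have hGn : ∀ n, Measurable (Gn n) := fun n => (hFnm n).lintegral_prod_right'
  have hGnmono : Monotone Gn := fun m n hmn x => lintegral_mono fun y => hmono x y hmn
  have hGnsup : ∀ x, ⨆ n, Gn n x = ∫⁻ y, F x y ∂ν := by
    intro x
    rw [hGndef]
    dsimp only
    rw [← lintegral_iSup (fun n => (hFnm n).of_uncurry_left) (fun m n hmn y => hmono x y hmn)]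
    simp_rw [hsup]
  -- finiteness
  have hfin : ∀ n, (∫⁻ x, Gn n x ^ p ∂μ) ≠ ⊤ := by
    intro n
    have hb : ∀ x, Gn n x ^ p ≤ (spanningSets μ n).indicator
        (fun _ => ((n : ℝ≥0∞) * ν (spanningSets ν n)) ^ p) x := by
      intro x
      rcases em (x ∈ spanningSets μ n) with hx | hx
      · rw [Set.indicator_of_mem hx]
        refine ENNReal.rpow_le_rpow ?_ hp0.le
        rw [hGndef]
        calc ∫⁻ y, Fn n x y ∂ν ≤ ∫⁻ y, (spanningSets ν n).indicator (fun _ => (n:ℝ≥0∞)) y ∂ν := by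
              refine lintegral_mono fun y => ?_
              rw [hFndef]; dsimp only
              rw [Set.indicator_apply, Set.indicator_apply]
              split_ifs with h1 h2 h2
              · exact min_le_right _ _
              · exact absurd h1.2 h2
              · exact zero_le
              · exact le_rfl
        _ = (n : ℝ≥0∞) * ν (spanningSets ν n) := by
              rw [lintegral_indicator_const (measurableSet_spanningSets ν n)]
      · rw [Set.indicator_of_notMem hx]
        have : Gn n x = 0 := by
          rw [hGndef]; dsimp only
          rw [lintegral_eq_zero_iff ((hFnm n).of_uncurry_left)]
          refine Filter.Eventually.of_forall fun y => ?_
          simp only [Pi.zero_apply, hFndef]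
          rw [Set.indicator_of_notMem (fun h => hx h.1)]
        rw [this, ENNReal.zero_rpow_of_pos hp0]
    refine ne_top_of_le_ne_top ?_ (lintegral_mono hb)
    rw [lintegral_indicator_const (measurableSet_spanningSets μ n)]
    exact ENNReal.mul_ne_top
      (ENNReal.rpow_ne_top_of_nonneg hp0.le
        (ENNReal.mul_ne_top (ENNReal.natCast_ne_top n) (measure_spanningSets_lt_top ν n).ne))
      (measure_spanningSets_lt_top μ n).ne
  have hstep : ∀ n, (∫⁻ x, Gn n x ^ p ∂μ) ^ (1/p) ≤
      ∫⁻ y, (∫⁻ x, (F x y) ^ p ∂μ) ^ (1/p) ∂ν := by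
    intro n
    calc (∫⁻ x, Gn n x ^ p ∂μ) ^ (1/p)
        ≤ ∫⁻ y, (∫⁻ x, (Fn n x y) ^ p ∂μ) ^ (1/p) ∂ν := minkowski_aux μ ν hp1 (hFnm n) (hfin n)
    _ ≤ ∫⁻ y, (∫⁻ x, (F x y) ^ p ∂μ) ^ (1/p) ∂ν := by
        refine lintegral_mono fun y => ?_
        refine ENNReal.rpow_le_rpow (lintegral_mono fun x => ?_) (by positivity)
        exact ENNReal.rpow_le_rpow (hFn_le n x y) hp0.le
  have hiso := ENNReal.orderIsoRpow p hp0
  have hlhs : (∫⁻ x, (∫⁻ y, F x y ∂ν) ^ p ∂μ) = ⨆ n, ∫⁻ x, Gn n x ^ p ∂μ := by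
    rw [← lintegral_iSup (fun n => (hGn n).pow_const p)
      (fun m n hmn x => ENNReal.rpow_le_rpow (hGnmono hmn x) hp0.le)]
    refine lintegral_congr fun x => ?_
    rw [← hGnsup x]
    have h2 : (⨆ n, Gn n x) ^ p = ⨆ n, Gn n x ^ p := by
      simpa only [ENNReal.orderIsoRpow_apply] using
        ((ENNReal.orderIsoRpow p hp0).map_iSup fun n => Gn n x)
    exact h2
  rw [hlhs]
  have : (⨆ n, ∫⁻ x, Gn n x ^ p ∂μ) ^ (1/p) =
      ⨆ n, (∫⁻ x, Gn n x ^ p ∂μ) ^ (1/p) := by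
    exact
      ((ENNReal.orderIsoRpow (1/p) (by positivity)).map_iSup
        fun n => ∫⁻ x, Gn n x ^ p ∂μ)
  rw [this]
  exact iSup_le hstep

/-- For `f` vanishing outside `(0,b)`:
`Γ(1-α) ‖D^α f‖_{L^p(0,b)} ≤ ‖x^{-α} f‖_{L^p(0,b)} + α ∫_0^b t^{-1-α} ω_p(f,t) dt`,
i.e. `‖D^α f‖_{L^p(0,b)} ≤ (1/Γ(1-α)) ‖f‖_{B^α_p}`. -/
theorem stmt_12 (α p : ℝ) (hα : α ∈ Set.Ioo (0 : ℝ) 1) (hp : 1 ≤ p)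
    (b : ℝ≥0∞) (hb : 0 < b) (f : ℝ → ℝ) (hmeas : Measurable f)
    (hf0 : ∀ x : ℝ, x ∉ intervalOf b → f x = 0) :
    ENNReal.ofReal (Real.Gamma (1 - α)) *
        eLpNorm (marchaud α f) (ENNReal.ofReal p) (volume.restrict (intervalOf b)) ≤
      eLpNorm (fun x => x ^ (-α) * f x) (ENNReal.ofReal p) (volume.restrict (intervalOf b)) +
        ENNReal.ofReal α *
          ∫⁻ t in intervalOf b,
            ENNReal.ofReal (t ^ (-1 - α)) * modulusLp (ENNReal.ofReal p) f t ∧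
    eLpNorm (marchaud α f) (ENNReal.ofReal p) (volume.restrict (intervalOf b)) ≤
      (ENNReal.ofReal (Real.Gamma (1 - α)))⁻¹ * besovNorm α p b f := by
  classical
  obtain ⟨hα0, hα1⟩ := hα
  have hΓ : 0 < Real.Gamma (1 - α) := Real.Gamma_pos_of_pos (by linarith)
  have hp0 : (0:ℝ) < p := by linarith
  set q : ℝ≥0∞ := ENNReal.ofReal p with hqdef
  have hq0 : q ≠ 0 := (ENNReal.ofReal_pos.mpr hp0).ne'
  have hqtop : q ≠ ⊤ := ENNReal.ofReal_ne_top
  have hqreal : q.toReal = p := ENNReal.toReal_ofReal hp0.le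
  have hq1 : (1:ℝ≥0∞) ≤ q := ENNReal.one_le_ofReal.mpr hp
  have hS : MeasurableSet (intervalOf b) := by
    have : intervalOf b = Set.Ioi (0:ℝ) ∩ ENNReal.ofReal ⁻¹' (Set.Iio b) := by
      ext x; simp [intervalOf, Set.mem_Ioi, Set.mem_Iio]
    rw [this]
    exact measurableSet_Ioi.inter (ENNReal.measurable_ofReal measurableSet_Iio)
  set S : Set ℝ := intervalOf b with hSdef
  set μS := volume.restrict S with hμSdef
  -- the components of the Marchaud derivative
  set g : ℝ → ℝ := fun x => x ^ (-α) * f x with hgdef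
  have hgm : Measurable g := (measurable_id.pow measurable_const).mul hmeas
  set W : ℝ × ℝ → ℝ := fun z =>
    Set.indicator (Set.Ioc 0 z.1) (fun t => (f z.1 - f t) * (z.1 - t) ^ (-1 - α)) z.2 with hWdef
  have hWm : Measurable W := by
    have hW' : W = fun z : ℝ × ℝ => if z.2 ∈ Set.Ioc 0 z.1
        then (f z.1 - f z.2) * (z.1 - z.2) ^ (-1 - α) else 0 := by
      funext z; rw [hWdef]; simp only [Set.indicator_apply]
    rw [hW']
    refine Measurable.ite ?_ ?_ measurable_const
    · exact (measurableSet_lt measurable_const measurable_snd).inter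
        (measurableSet_le measurable_snd measurable_fst)
    · exact ((hmeas.comp measurable_fst).sub (hmeas.comp measurable_snd)).mul
        ((measurable_fst.sub measurable_snd).pow measurable_const)
  set K : ℝ → ℝ := fun x => ∫ t, W (x, t) with hKdef
  have hKm : Measurable K := hWm.stronglyMeasurable.integral_prod_right'.measurable
  set E : ℝ → ℝ := fun x => g x + α * K x with hEdef
  have hEm : Measurable E := hgm.add (measurable_const.mul hKm)
  have hmarch : ∀ x ∈ S, marchaud α f x = (1 / Real.Gamma (1 - α)) * E x := by
    intro x hx
    have hx0 : (0:ℝ) < x := hx.1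
    show _ = (1 / Real.Gamma (1 - α)) * (g x + α * K x)
    rw [marchaud, hgdef, hKdef]
    congr 3
    rw [intervalIntegral.integral_of_le hx0.le,
      ← MeasureTheory.integral_indicator measurableSet_Ioc]
  have hAE : marchaud α f =ᵐ[μS] (1 / Real.Gamma (1 - α)) • E := by
    filter_upwards [ae_restrict_mem hS] with x hx
    rw [hmarch x hx]; simp [smul_eq_mul]
  have hM1 : eLpNorm (marchaud α f) q μS
      = ENNReal.ofReal (1 / Real.Gamma (1 - α)) * eLpNorm E q μS := by
    rw [eLpNorm_congr_ae hAE, eLpNorm_const_smul,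
      Real.enorm_eq_ofReal (by positivity)]
  have hΓM : ENNReal.ofReal (Real.Gamma (1 - α)) * eLpNorm (marchaud α f) q μS
      = eLpNorm E q μS := by
    rw [hM1, ← mul_assoc, ← ENNReal.ofReal_mul hΓ.le, mul_one_div_cancel hΓ.ne',
      ENNReal.ofReal_one, one_mul]
  have htri : eLpNorm E q μS ≤ eLpNorm g q μS + ENNReal.ofReal α * eLpNorm K q μS := by
    have h2 : eLpNorm (fun x => α * K x) q μS = ENNReal.ofReal α * eLpNorm K q μS := by
      have hsm : (fun x => α * K x) = α • K := by funext x; simp [smul_eq_mul]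
      rw [hsm, eLpNorm_const_smul, Real.enorm_eq_ofReal hα0.le]
    calc eLpNorm E q μS
        ≤ eLpNorm g q μS + eLpNorm (fun x => α * K x) q μS :=
          eLpNorm_add_le hgm.aestronglyMeasurable
            (measurable_const.mul hKm).aestronglyMeasurable hq1
    _ = eLpNorm g q μS + ENNReal.ofReal α * eLpNorm K q μS := by rw [h2]
  -- the key estimate on K
  set Φ : ℝ → ℝ → ℝ≥0∞ := fun x s =>
    (Set.Ioo 0 x).indicator
      (fun s => (‖f x - f (x - s)‖₊ : ℝ≥0∞) * ENNReal.ofReal (s ^ (-1 - α))) s with hΦdef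
  have hΦm : Measurable (Function.uncurry Φ) := by
    have hΦ' : Function.uncurry Φ = fun z : ℝ × ℝ => if z.2 ∈ Set.Ioo 0 z.1
        then (‖f z.1 - f (z.1 - z.2)‖₊ : ℝ≥0∞) * ENNReal.ofReal (z.2 ^ (-1 - α)) else 0 := by
      funext z; rw [hΦdef]; simp only [Function.uncurry, Set.indicator_apply]
    rw [hΦ']
    refine Measurable.ite ?_ ?_ measurable_const
    · exact (measurableSet_lt measurable_const measurable_snd).inter
        (measurableSet_lt measurable_snd measurable_fst)
    · exact (((hmeas.comp measurable_fst).sub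
        (hmeas.comp (measurable_fst.sub measurable_snd))).nnnorm.coe_nnreal_ennreal).mul
        ((measurable_snd.pow measurable_const).ennreal_ofReal)
  have hpt : ∀ x ∈ S, (‖K x‖₊ : ℝ≥0∞) ≤ ∫⁻ s, Φ x s ∂μS := by
    intro x hx
    have hx0 : (0:ℝ) < x := hx.1
    have hsub : Set.Ioo 0 x ⊆ S := by
      intro s hs
      exact ⟨hs.1, lt_of_le_of_lt (ENNReal.ofReal_le_ofReal hs.2.le) hx.2⟩
    calc (‖K x‖₊ : ℝ≥0∞) ≤ ∫⁻ t, (‖W (x, t)‖₊ : ℝ≥0∞) :=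
          enorm_integral_le_lintegral_enorm _
    _ = ∫⁻ t in Set.Ioc 0 x, (‖(f x - f t) * (x - t) ^ (-1 - α)‖₊ : ℝ≥0∞) := by
        rw [← lintegral_indicator measurableSet_Ioc]
        refine lintegral_congr fun t => ?_
        rw [hWdef]
        simp only [Set.indicator_apply]
        split_ifs <;> simp
    _ = ∫⁻ t in Set.Ioc 0 x, (‖f x - f t‖₊ : ℝ≥0∞) * ENNReal.ofReal ((x - t) ^ (-1 - α)) := by
        refine setLIntegral_congr_fun measurableSet_Ioc
          (fun t ht => ?_)
        rw [nnnorm_mul, ENNReal.coe_mul, ← enorm_eq_nnnorm ((x - t) ^ (-1 - α)),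
          Real.enorm_eq_ofReal (Real.rpow_nonneg (sub_nonneg.mpr ht.2) _)]
    _ = ∫⁻ s in Set.Ico 0 x,
          (‖f x - f (x - s)‖₊ : ℝ≥0∞) * ENNReal.ofReal ((x - (x - s)) ^ (-1 - α)) := by
        have hcv := (MeasureTheory.Measure.measurePreserving_sub_left (volume : Measure ℝ) x)
          |>.setLIntegral_comp_emb (MeasurableEquiv.subLeft x).measurableEmbedding
          (fun t => (‖f x - f t‖₊ : ℝ≥0∞) * ENNReal.ofReal ((x - t) ^ (-1 - α))) (Set.Ico 0 x)
        rw [hcv, Set.image_const_sub_Ico, sub_self, sub_zero]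
    _ = ∫⁻ s in Set.Ioo 0 x, (‖f x - f (x - s)‖₊ : ℝ≥0∞) * ENNReal.ofReal (s ^ (-1 - α)) := by
        rw [setLIntegral_congr (MeasureTheory.Ioo_ae_eq_Ico (μ := volume) (a := (0:ℝ)) (b := x))]
        refine lintegral_congr fun s => ?_
        rw [_root_.sub_sub_cancel]
    _ = ∫⁻ s, Φ x s ∂μS := by
        rw [hΦdef]
        dsimp only
        rw [lintegral_indicator measurableSet_Ioo,
          Measure.restrict_restrict measurableSet_Ioo, Set.inter_eq_left.mpr hsub]
  have hKnorm : eLpNorm K q μS = (∫⁻ x, (‖K x‖₊ : ℝ≥0∞) ^ p ∂μS) ^ (1/p) := by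
    rw [eLpNorm_eq_lintegral_rpow_enorm_toReal hq0 hqtop, hqreal, one_div]; rfl
  have hKey : eLpNorm K q μS ≤ ∫⁻ t in S, ENNReal.ofReal (t ^ (-1 - α)) * modulusLp q f t := by
    rw [hKnorm]
    calc (∫⁻ x, (‖K x‖₊ : ℝ≥0∞) ^ p ∂μS) ^ (1/p)
        ≤ (∫⁻ x, (∫⁻ s, Φ x s ∂μS) ^ p ∂μS) ^ (1/p) := by
          refine ENNReal.rpow_le_rpow (lintegral_mono_ae ?_) (by positivity)
          filter_upwards [ae_restrict_mem hS] with x hx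
          exact ENNReal.rpow_le_rpow (hpt x hx) hp0.le
    _ ≤ ∫⁻ s, (∫⁻ x, (Φ x s) ^ p ∂μS) ^ (1/p) ∂μS := minkowski_lintegral μS μS hp hΦm
    _ ≤ ∫⁻ s in S, ENNReal.ofReal (s ^ (-1 - α)) * modulusLp q f s := by
        refine lintegral_mono_ae ?_
        filter_upwards [ae_restrict_mem hS] with s hs
        have hs0 : (0:ℝ) < s := hs.1
        have hΦle : ∀ x, Φ x s ≤ ENNReal.ofReal (s ^ (-1 - α)) * (‖f x - f (x - s)‖₊ : ℝ≥0∞) := by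
          intro x
          rw [hΦdef]
          exact (Set.indicator_le_self _ _ s).trans_eq (mul_comm _ _)
        have hc_ne_top : (ENNReal.ofReal (s ^ (-1 - α))) ^ p ≠ ⊤ :=
          ENNReal.rpow_ne_top_of_nonneg hp0.le ENNReal.ofReal_ne_top
        calc (∫⁻ x, (Φ x s) ^ p ∂μS) ^ (1/p)
            ≤ (∫⁻ x, (ENNReal.ofReal (s ^ (-1 - α))) ^ p * (‖f x - f (x - s)‖₊ : ℝ≥0∞) ^ p
                ∂volume) ^ (1/p) := by
              refine ENNReal.rpow_le_rpow ?_ (by positivity)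
              refine le_trans (lintegral_mono fun x => ?_)
                (lintegral_mono' Measure.restrict_le_self le_rfl)
              rw [← ENNReal.mul_rpow_of_nonneg _ _ hp0.le]
              exact ENNReal.rpow_le_rpow (hΦle x) hp0.le
        _ = ((ENNReal.ofReal (s ^ (-1 - α))) ^ p
              * ∫⁻ x, ((‖f x - f (x - s)‖₊ : ℝ≥0∞)) ^ p ∂volume) ^ (1/p) := by
              rw [lintegral_const_mul' _ _ hc_ne_top]
        _ = ENNReal.ofReal (s ^ (-1 - α))
              * (∫⁻ x, ((‖f x - f (x - s)‖₊ : ℝ≥0∞)) ^ p ∂volume) ^ (1/p) := by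
              rw [ENNReal.mul_rpow_of_nonneg _ _ (by positivity), ← ENNReal.rpow_mul,
                mul_one_div_cancel hp0.ne', ENNReal.rpow_one]
        _ = ENNReal.ofReal (s ^ (-1 - α))
              * (∫⁻ y, ((‖f (y + s) - f y‖₊ : ℝ≥0∞)) ^ p ∂volume) ^ (1/p) := by
              congr 2
              rw [← lintegral_add_right_eq_self
                (fun x => ((‖f x - f (x - s)‖₊ : ℝ≥0∞)) ^ p) s]
              refine lintegral_congr fun y => ?_
              rw [add_sub_cancel_right]
        _ ≤ ENNReal.ofReal (s ^ (-1 - α)) * modulusLp q f s := by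
              refine mul_le_mul_right ?_ _
              have heq : (∫⁻ y, ((‖f (y + s) - f y‖₊ : ℝ≥0∞)) ^ p ∂volume) ^ (1/p)
                  = eLpNorm (fun y => f (y + s) - f y) q volume := by
                rw [eLpNorm_eq_lintegral_rpow_enorm_toReal hq0 hqtop, hqreal, one_div]; rfl
              rw [heq, modulusLp]
              exact le_biSup (fun h => eLpNorm (fun x => f (x + h) - f x) q volume)
                (Set.mem_Icc.mpr ⟨by linarith, le_rfl⟩)
  constructor
  · calc ENNReal.ofReal (Real.Gamma (1 - α)) * eLpNorm (marchaud α f) q μS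
        = eLpNorm E q μS := hΓM
    _ ≤ eLpNorm g q μS + ENNReal.ofReal α * eLpNorm K q μS := htri
    _ ≤ eLpNorm g q μS + ENNReal.ofReal α
          * ∫⁻ t in S, ENNReal.ofReal (t ^ (-1 - α)) * modulusLp q f t := by
        exact add_le_add_right (mul_le_mul_right hKey _) _
  · have hfirst : ENNReal.ofReal (Real.Gamma (1 - α)) * eLpNorm (marchaud α f) q μS
        ≤ besovNorm α p b f := by
      calc ENNReal.ofReal (Real.Gamma (1 - α)) * eLpNorm (marchaud α f) q μS
          = eLpNorm E q μS := hΓM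
      _ ≤ eLpNorm g q μS + ENNReal.ofReal α * eLpNorm K q μS := htri
      _ ≤ besovNorm α p b f := by
          rw [besovNorm]
          exact add_le_add_right (mul_le_mul_right hKey _) _
    have hΓ0 : ENNReal.ofReal (Real.Gamma (1 - α)) ≠ 0 := (ENNReal.ofReal_pos.mpr hΓ).ne'
    calc eLpNorm (marchaud α f) q μS
        = (ENNReal.ofReal (Real.Gamma (1 - α)))⁻¹
            * (ENNReal.ofReal (Real.Gamma (1 - α)) * eLpNorm (marchaud α f) q μS) := by
          rw [← mul_assoc, ENNReal.inv_mul_cancel hΓ0 ENNReal.ofReal_ne_top, one_mul]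
    _ ≤ (ENNReal.ofReal (Real.Gamma (1 - α)))⁻¹ * besovNorm α p b f :=
          mul_le_mul_right hfirst _
end
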